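/- arXiv:1103.0197 — 4 statements merged into one kernel-verified Lean document; each statement's English description precedes it below -/
import Mathlib

section
/- For all real numbers r, s ∈ (0,π) with r + s ≤ π and every θ ∈ [0,π], one has arccos(cos r·cos s + sin r·sin s·cos θ) ≤ r + s, and equality holds if and only if θ = π. -/
open Set

/-- For `r, s ∈ (0,π)` with `r + s ≤ π` and `θ ∈ [0,π]`,
`arccos(cos r · cos s + sin r · sin s · cos θ) ≤ r + s`, with equality iff `θ = π`. -/
theorem statement8 (r s : ℝ) (hr : r ∈ Ioo (0:ℝ) Real.pi) (hs : s ∈ Ioo (0:ℝ) Real.pi)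
    (hrs : r + s ≤ Real.pi) (θ : ℝ) (hθ : θ ∈ Icc (0:ℝ) Real.pi) :
    Real.arccos (Real.cos r * Real.cos s + Real.sin r * Real.sin s * Real.cos θ) ≤ r + s ∧
    (Real.arccos (Real.cos r * Real.cos s + Real.sin r * Real.sin s * Real.cos θ) = r + s ↔
      θ = Real.pi) := by
  obtain ⟨hr0, hrπ⟩ := hr
  obtain ⟨hs0, hsπ⟩ := hs
  obtain ⟨hθ0, hθπ⟩ := hθ
  have hsinr : 0 < Real.sin r := Real.sin_pos_of_pos_of_lt_pi hr0 hrπ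
  have hsins : 0 < Real.sin s := Real.sin_pos_of_pos_of_lt_pi hs0 hsπ
  have hprod : 0 < Real.sin r * Real.sin s := mul_pos hsinr hsins
  set x := Real.cos r * Real.cos s + Real.sin r * Real.sin s * Real.cos θ with hxdef
  have hcosθ1 : Real.cos θ ≤ 1 := Real.cos_le_one θ
  have hcosθ1' : -1 ≤ Real.cos θ := Real.neg_one_le_cos θ
  have hlow : Real.cos (r + s) ≤ x := by
    rw [Real.cos_add, hxdef]
    nlinarith
  have hhigh : x ≤ Real.cos (r - s) := by
    rw [Real.cos_sub, hxdef]
    nlinarith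
  have hx1 : -1 ≤ x := le_trans (Real.neg_one_le_cos _) hlow
  have hx2 : x ≤ 1 := le_trans hhigh (Real.cos_le_one _)
  have hrs0 : 0 ≤ r + s := by linarith
  have harc : Real.arccos (Real.cos (r + s)) = r + s := Real.arccos_cos hrs0 hrs
  have hle : Real.arccos x ≤ r + s := by
    rw [← harc]
    have h1 := Real.monotone_arcsin hlow
    rw [Real.arccos_eq_pi_div_two_sub_arcsin, Real.arccos_eq_pi_div_two_sub_arcsin]
    linarith
  refine ⟨hle, ?_, ?_⟩
  · intro h
    have hxeq : x = Real.cos (r + s) := by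
      have := Real.cos_arccos hx1 hx2
      rw [h] at this
      linarith [this]
    have hcθ : Real.cos θ = -1 := by
      rw [Real.cos_add, hxdef] at hxeq
      nlinarith
    have : Real.cos θ = Real.cos Real.pi := by rw [hcθ, Real.cos_pi]
    exact Real.injOn_cos ⟨hθ0, hθπ⟩ ⟨Real.pi_pos.le, le_refl _⟩ this
  · intro h
    rw [hxdef, h, Real.cos_pi]
    rw [show Real.cos r * Real.cos s + Real.sin r * Real.sin s * (-1)
        = Real.cos (r + s) by rw [Real.cos_add]; ring]
    exact harc
end

section
/- Let c > 0, r ∈ (0,π), t ∈ ℝ and A ≥ 0, and define h(s) := −c·log( sin( arccos( cos(r + s·t)·cos(s·A·sin r) ) ) ) for s in a neighborhood of 0 (note the arccos argument equals cos r at s = 0, so h is well defined near 0). Then h is twice differentiable at 0 and h''(0) − (1/c)·h'(0)² = c·( t² − A²·cos²r ). -/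
open Filter Set


noncomputable def FF (r t A s : ℝ) : ℝ :=
  Real.cos (r + s*t) * Real.cos (s * A * Real.sin r)

noncomputable def FF' (r t A s : ℝ) : ℝ :=
  (-Real.sin (r + s*t) * t) * Real.cos (s * A * Real.sin r)
    + Real.cos (r + s*t) * (-Real.sin (s * A * Real.sin r) * (A * Real.sin r))

noncomputable def FF'' (r t A s : ℝ) : ℝ :=
  ((-(Real.cos (r + s*t) * t) * t) * Real.cos (s * A * Real.sin r)
    + (-Real.sin (r + s*t) * t) * (-Real.sin (s * A * Real.sin r) * (A * Real.sin r)))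
  + ((-Real.sin (r + s*t) * t) * (-Real.sin (s * A * Real.sin r) * (A * Real.sin r))
    + Real.cos (r + s*t) * (-(Real.cos (s * A * Real.sin r) * (A * Real.sin r)) * (A * Real.sin r)))

lemma inner1 (r t : ℝ) (s : ℝ) : HasDerivAt (fun s : ℝ => r + s*t) t s := by
  simpa using ((hasDerivAt_id s).mul_const t).const_add r

lemma inner2 (r A : ℝ) (s : ℝ) : HasDerivAt (fun s : ℝ => s * A * Real.sin r) (A * Real.sin r) s := by
  simpa [mul_assoc] using (hasDerivAt_id s).mul_const (A * Real.sin r)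

lemma hcos1 (r t A s : ℝ) : HasDerivAt (fun s : ℝ => Real.cos (r + s*t)) (-Real.sin (r+s*t) * t) s := by
  simpa [Function.comp_def] using (Real.hasDerivAt_cos (r+s*t)).comp s (inner1 r t s)

lemma hcos2 (r t A s : ℝ) : HasDerivAt (fun s : ℝ => Real.cos (s*A*Real.sin r))
    (-Real.sin (s*A*Real.sin r) * (A*Real.sin r)) s := by
  simpa [Function.comp_def] using (Real.hasDerivAt_cos (s*A*Real.sin r)).comp s (inner2 r A s)

lemma hasDerivAt_FF (r t A s : ℝ) : HasDerivAt (fun s => FF r t A s) (FF' r t A s) s := by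
  simpa [FF, FF', Pi.mul_def] using (hcos1 r t A s).mul (hcos2 r t A s)

lemma hasDerivAt_FF' (r t A s : ℝ) : HasDerivAt (fun s => FF' r t A s) (FF'' r t A s) s := by
  have hsin1 : HasDerivAt (fun s : ℝ => Real.sin (r + s*t)) (Real.cos (r+s*t) * t) s := by
    simpa [Function.comp_def] using (Real.hasDerivAt_sin (r+s*t)).comp s (inner1 r t s)
  have hsin2 : HasDerivAt (fun s : ℝ => Real.sin (s*A*Real.sin r))
      (Real.cos (s*A*Real.sin r) * (A*Real.sin r)) s := by
    simpa [Function.comp_def] using (Real.hasDerivAt_sin (s*A*Real.sin r)).comp s (inner2 r A s)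
  have T1 := (hsin1.neg.mul_const t).mul (hcos2 r t A s)
  have T2 := (hcos1 r t A s).mul (hsin2.neg.mul_const (A * Real.sin r))
  simpa [FF', FF'', Pi.add_def, Pi.mul_def] using T1.add T2

/-- Radial-weight computation for the punctured spherical cone:
for `c > 0`, `r ∈ (0,π)`, `t ∈ ℝ`, `A ≥ 0`, the function
`h(s) = -c·log(sin(arccos(cos(r+st)·cos(s·A·sin r))))` is twice differentiable at `0` and
`h''(0) - (1/c)·h'(0)² = c·(t² - A²·cos²r)`. -/
theorem statement12 (c r t A : ℝ) (hc : 0 < c) (hr : r ∈ Ioo (0:ℝ) Real.pi) (hA : 0 ≤ A) :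
    ∃ (h' : ℝ → ℝ) (h'' : ℝ),
      (∀ᶠ s in nhds (0:ℝ), HasDerivAt
        (fun s : ℝ => -c * Real.log (Real.sin
          (Real.arccos (Real.cos (r + s*t) * Real.cos (s * A * Real.sin r))))) (h' s) s) ∧
      HasDerivAt h' h'' 0 ∧
      h'' - (1/c) * (h' 0)^2 = c * (t^2 - A^2 * Real.cos r ^ 2) := by
  obtain ⟨hr0, hrpi⟩ := hr
  have hsr : 0 < Real.sin r := Real.sin_pos_of_pos_of_lt_pi hr0 hrpi
  have hpyth : Real.sin r ^ 2 + Real.cos r ^ 2 = 1 := Real.sin_sq_add_cos_sq r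
  have hF0 : FF r t A 0 = Real.cos r := by simp [FF]
  have hF'0 : FF' r t A 0 = -Real.sin r * t := by simp [FF']
  have hF''0 : FF'' r t A 0 = -(Real.cos r * t) * t + Real.cos r * (-(A * Real.sin r) * (A * Real.sin r)) := by
    simp [FF'']
  have hcos2lt : Real.cos r ^ 2 < 1 := by nlinarith
  have hcontF : Continuous (fun s => FF r t A s) := by
    unfold FF; fun_prop
  have hU : ∀ᶠ s in nhds (0:ℝ), FF r t A s ^ 2 < 1 := by
    have h1 : ContinuousAt (fun s => FF r t A s ^ 2) 0 := (hcontF.pow 2).continuousAt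
    have hlt0 : FF r t A 0 ^ 2 < 1 := by rw [hF0]; exact hcos2lt
    have := h1.eventually_lt continuousAt_const hlt0
    simpa using this
  refine ⟨fun s => c * FF r t A s * FF' r t A s / (1 - FF r t A s ^ 2),
    (c * (FF' r t A 0 * FF' r t A 0 + FF r t A 0 * FF'' r t A 0) * (1 - FF r t A 0 ^ 2)
      - c * FF r t A 0 * FF' r t A 0 * (-(2 * FF r t A 0 ^ 1 * FF' r t A 0)))
      / (1 - FF r t A 0 ^ 2) ^ 2, ?_, ?_, ?_⟩
  · filter_upwards [hU.eventually_nhds] with s hs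
    have hFs2 : FF r t A s ^ 2 < 1 := hs.self_of_nhds
    have hne : 1 - FF r t A s ^ 2 ≠ 0 := by nlinarith
    have hu : HasDerivAt (fun y => 1 - FF r t A y ^ 2)
        (-(2 * FF r t A s ^ 1 * FF' r t A s)) s :=
      ((hasDerivAt_FF r t A s).pow 2).const_sub 1
    have hlog : HasDerivAt (fun y => Real.log (1 - FF r t A y ^ 2))
        ((1 - FF r t A s ^ 2)⁻¹ * (-(2 * FF r t A s ^ 1 * FF' r t A s))) s := by
      simpa [Function.comp_def] using (Real.hasDerivAt_log hne).comp s hu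
    have hg : HasDerivAt (fun y => -(c/2) * Real.log (1 - FF r t A y ^ 2))
        (c * FF r t A s * FF' r t A s / (1 - FF r t A s ^ 2)) s := by
      have := hlog.const_mul (-(c/2))
      exact this.congr_deriv (by ring)
    refine hg.congr_of_eventuallyEq ?_
    filter_upwards [hs] with y hy
    have hy' : (0:ℝ) ≤ 1 - FF r t A y ^ 2 := by nlinarith
    show -c * Real.log (Real.sin (Real.arccos (FF r t A y))) = _
    rw [Real.sin_arccos, show (1:ℝ) - FF r t A y ^ 2 = 1 - FF r t A y * FF r t A y by ring,
      Real.log_sqrt (by nlinarith)]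
    rw [show (1:ℝ) - FF r t A y * FF r t A y = 1 - FF r t A y ^ 2 by ring]
    ring
  · have hne0 : 1 - FF r t A 0 ^ 2 ≠ 0 := by rw [hF0]; nlinarith
    have hN : HasDerivAt (fun s => c * FF r t A s * FF' r t A s)
        (c * (FF' r t A 0 * FF' r t A 0 + FF r t A 0 * FF'' r t A 0)) 0 := by
      simpa [mul_assoc] using
        ((hasDerivAt_FF r t A 0).mul (hasDerivAt_FF' r t A 0)).const_mul c
    have hD : HasDerivAt (fun s => 1 - FF r t A s ^ 2)
        (-(2 * FF r t A 0 ^ 1 * FF' r t A 0)) 0 :=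
      ((hasDerivAt_FF r t A 0).pow 2).const_sub 1
    exact hN.div hD hne0
  · have h1 : (1:ℝ) - Real.cos r ^ 2 = Real.sin r ^ 2 := by nlinarith
    simp only [hF0, hF'0, hF''0, h1]
    have hsne : Real.sin r ≠ 0 := ne_of_gt hsr
    field_simp
    ring
end

section
/- For κ ≠ 0 define C_κ(r) := cos(√κ·r) and S_κ(r) := sin(√κ·r)/√κ if κ > 0, and C_κ(r) := cosh(√(−κ)·r) and S_κ(r) := sinh(√(−κ)·r)/√(−κ) if κ < 0, and let C_κ^{−1} denote the inverse of C_κ (i.e. C_κ^{−1}(u) = arccos(u)/√κ for κ > 0 and C_κ^{−1}(u) = arccosh(u)/√(−κ) for κ < 0). Then for all fixed s, t ≥ 0 and θ ∈ [0,π], lim_{κ → 0, κ ≠ 0} C_κ^{−1}( C_κ(s)·C_κ(t) + κ·S_κ(s)·S_κ(t)·cos θ ) = sqrt( s² + t² − 2st·cos θ ). -/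
open Filter Set

noncomputable section

/-- `C_κ`. -/
def Ck (κ r : ℝ) : ℝ :=
  if 0 < κ then Real.cos (Real.sqrt κ * r) else Real.cosh (Real.sqrt (-κ) * r)

/-- `S_κ`. -/
def Sk (κ r : ℝ) : ℝ :=
  if 0 < κ then Real.sin (Real.sqrt κ * r) / Real.sqrt κ
  else Real.sinh (Real.sqrt (-κ) * r) / Real.sqrt (-κ)

/-- The inverse hyperbolic cosine `arcosh(u) = log(u + sqrt(u² - 1))`. -/
def arcosh (u : ℝ) : ℝ := Real.log (u + Real.sqrt (u^2 - 1))

/-- `C_κ⁻¹`, the inverse of `C_κ`. -/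
def CkInv (κ u : ℝ) : ℝ :=
  if 0 < κ then Real.arccos u / Real.sqrt κ else arcosh u / Real.sqrt (-κ)


lemma tendsto_sin_div : Tendsto (fun y : ℝ => Real.sin y / y) (nhdsWithin 0 {(0:ℝ)}ᶜ) (nhds 1) := by
  have h := (Real.hasDerivAt_sin 0)
  rw [hasDerivAt_iff_tendsto_slope] at h
  simpa [slope_fun_def_field, Real.cos_zero] using h

lemma tendsto_sinh_div : Tendsto (fun y : ℝ => Real.sinh y / y) (nhdsWithin 0 {(0:ℝ)}ᶜ) (nhds 1) := by
  have h := (Real.hasDerivAt_sinh 0)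
  rw [hasDerivAt_iff_tendsto_slope] at h
  simpa [slope_fun_def_field, Real.cosh_zero] using h

lemma map_into_ne (x : ℝ) (hx : x ≠ 0) :
    Tendsto (fun h : ℝ => x * h / 2) (nhdsWithin 0 (Ioi 0)) (nhdsWithin 0 {(0:ℝ)}ᶜ) := by
  rw [tendsto_nhdsWithin_iff]
  constructor
  · have : Tendsto (fun h : ℝ => x * h / 2) (nhds 0) (nhds (x * 0 / 2)) :=
      ((continuous_const.mul continuous_id).div_const 2).tendsto 0
    simpa using this.mono_left nhdsWithin_le_nhds
  · filter_upwards [self_mem_nhdsWithin] with h hh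
    have : h ≠ 0 := ne_of_gt hh
    simp only [mem_compl_iff, mem_singleton_iff]
    positivity

lemma limA (x : ℝ) :
    Tendsto (fun h : ℝ => 2 * Real.sin (x * h / 2) / h) (nhdsWithin 0 (Ioi 0)) (nhds x) := by
  rcases eq_or_ne x 0 with rfl | hx
  · simpa using tendsto_const_nhds (α := ℝ) (f := nhdsWithin (0:ℝ) (Ioi 0)) (a := (0:ℝ))
  · have h1 : Tendsto (fun h : ℝ => x * (Real.sin (x * h / 2) / (x * h / 2)))
        (nhdsWithin 0 (Ioi 0)) (nhds (x * 1)) :=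
      (tendsto_sin_div.comp (map_into_ne x hx)).const_mul x
    rw [mul_one] at h1
    apply h1.congr'
    filter_upwards [self_mem_nhdsWithin] with h hh
    have h0 : h ≠ 0 := ne_of_gt hh
    field_simp

lemma limB (x : ℝ) :
    Tendsto (fun h : ℝ => 2 * Real.sinh (x * h / 2) / h) (nhdsWithin 0 (Ioi 0)) (nhds x) := by
  rcases eq_or_ne x 0 with rfl | hx
  · simpa using tendsto_const_nhds (α := ℝ) (f := nhdsWithin (0:ℝ) (Ioi 0)) (a := (0:ℝ))
  · have h1 : Tendsto (fun h : ℝ => x * (Real.sinh (x * h / 2) / (x * h / 2)))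
        (nhdsWithin 0 (Ioi 0)) (nhds (x * 1)) :=
      (tendsto_sinh_div.comp (map_into_ne x hx)).const_mul x
    rw [mul_one] at h1
    apply h1.congr'
    filter_upwards [self_mem_nhdsWithin] with h hh
    have h0 : h ≠ 0 := ne_of_gt hh
    field_simp

lemma two_sub_cos (x : ℝ) : 2 * (1 - Real.cos x) = (2 * Real.sin (x / 2)) ^ 2 := by
  have h1 : Real.cos (2 * (x / 2)) = 1 - 2 * Real.sin (x / 2) ^ 2 := Real.cos_two_mul' (x / 2) ▸ by
    have := Real.sin_sq_add_cos_sq (x / 2); linarith [Real.cos_two_mul' (x/2)]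
  have h2 : (2 : ℝ) * (x / 2) = x := by ring
  rw [h2] at h1
  nlinarith [h1]

lemma two_cosh_sub (x : ℝ) : 2 * (Real.cosh x - 1) = (2 * Real.sinh (x / 2)) ^ 2 := by
  have h1 : Real.cosh (2 * (x / 2)) = Real.cosh (x/2) ^ 2 + Real.sinh (x/2) ^ 2 :=
    Real.cosh_two_mul (x / 2)
  have h2 : (2 : ℝ) * (x / 2) = x := by ring
  rw [h2] at h1
  nlinarith [Real.cosh_sq_sub_sinh_sq (x/2)]

lemma sqrt_two_sub (v : ℝ) (h1 : -1 ≤ v) (h2 : v ≤ 1) :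
    Real.sqrt (2 * (1 - v)) = 2 * Real.sin (Real.arccos v / 2) := by
  have hx0 := Real.arccos_nonneg v
  have hxpi := Real.arccos_le_pi v
  have hsin : 0 ≤ Real.sin (Real.arccos v / 2) :=
    Real.sin_nonneg_of_nonneg_of_le_pi (by linarith) (by linarith [Real.pi_pos])
  have := two_sub_cos (Real.arccos v)
  rw [Real.cos_arccos h1 h2] at this
  rw [this, Real.sqrt_sq (by linarith)]

lemma arccos_lower (v : ℝ) (h1 : -1 ≤ v) (h2 : v ≤ 1) :
    Real.sqrt (2 * (1 - v)) ≤ Real.arccos v := by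
  rw [sqrt_two_sub v h1 h2]
  have := Real.sin_le (x := Real.arccos v / 2) (by linarith [Real.arccos_nonneg v])
  linarith

lemma arccos_upper (v : ℝ) (h0 : 0 < v) (h2 : v ≤ 1) :
    Real.arccos v ≤ Real.sqrt (2 * (1 - v)) / Real.sqrt ((1 + v) / 2) := by
  have h1 : -1 ≤ v := by linarith
  have hx0 := Real.arccos_nonneg v
  have hxpi := Real.arccos_le_pi v
  have hcoshalf : Real.cos (Real.arccos v / 2) = Real.sqrt ((1 + v) / 2) := by
    rw [Real.cos_half (by linarith [Real.pi_pos]) hxpi, Real.cos_arccos h1 h2]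
  rcases eq_or_lt_of_le hx0 with heq | hlt
  · rw [← heq]
    positivity
  · have hlt2 : Real.arccos v < Real.pi / 2 := Real.arccos_lt_pi_div_two.2 h0
    have htan := Real.lt_tan (by linarith : 0 < Real.arccos v / 2) (by linarith)
    rw [Real.tan_eq_sin_div_cos] at htan
    have hcpos : 0 < Real.cos (Real.arccos v / 2) :=
      Real.cos_pos_of_mem_Ioo ⟨by linarith [Real.pi_pos], by linarith⟩
    rw [sqrt_two_sub v h1 h2, ← hcoshalf]
    rw [le_div_iff₀ hcpos]
    calc Real.arccos v * Real.cos (Real.arccos v / 2)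
        ≤ (Real.sin (Real.arccos v / 2) / Real.cos (Real.arccos v / 2)) * 2 * Real.cos (Real.arccos v / 2) := by
          nlinarith
      _ = 2 * Real.sin (Real.arccos v / 2) := by field_simp

lemma arcosh_nonneg (u : ℝ) (hu : 1 ≤ u) : 0 ≤ arcosh u :=
  Real.log_nonneg (by nlinarith [Real.sqrt_nonneg (u^2-1)])

lemma cosh_arcosh (u : ℝ) (hu : 1 ≤ u) : Real.cosh (arcosh u) = u := by
  have hsq : Real.sqrt (u^2 - 1) ^ 2 = u^2 - 1 := Real.sq_sqrt (by nlinarith)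
  have hv : (0:ℝ) < u + Real.sqrt (u^2 - 1) := by nlinarith [Real.sqrt_nonneg (u^2-1)]
  have hinv : (u + Real.sqrt (u^2 - 1))⁻¹ = u - Real.sqrt (u^2 - 1) := by
    exact inv_eq_of_mul_eq_one_right (by nlinarith)
  rw [arcosh, Real.cosh_eq, Real.exp_log hv, ← Real.log_inv, Real.exp_log (by positivity), hinv]
  ring

lemma self_le_sinh (x : ℝ) (hx : 0 ≤ x) : x ≤ Real.sinh x := by
  rcases eq_or_lt_of_le hx with h | h
  · simp [← h]
  · exact (Real.self_lt_sinh_iff.2 h).le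

lemma sinh_le_mul_cosh (x : ℝ) (hx : 0 ≤ x) : Real.sinh x ≤ x * Real.cosh x := by
  have hmono : MonotoneOn (fun t => t * Real.cosh t - Real.sinh t) (Ici (0:ℝ)) := by
    apply monotoneOn_of_deriv_nonneg (convex_Ici 0)
    · fun_prop
    · intro t ht
      exact (((hasDerivAt_id t).mul (Real.hasDerivAt_cosh t)).sub
        (Real.hasDerivAt_sinh t)).differentiableAt.differentiableWithinAt
    · intro t ht
      rw [interior_Ici] at ht
      have hd : HasDerivAt (fun t : ℝ => t * Real.cosh t - Real.sinh t)
          (1 * Real.cosh t + t * Real.sinh t - Real.cosh t) t := by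
        exact ((hasDerivAt_id' t).mul (Real.hasDerivAt_cosh t)).sub (Real.hasDerivAt_sinh t)
      rw [hd.deriv]
      have : 0 ≤ Real.sinh t := Real.sinh_nonneg_iff.2 (le_of_lt ht)
      nlinarith [le_of_lt (show (0:ℝ) < t from ht)]
  have := hmono (self_mem_Ici) hx hx
  simpa using this

lemma sqrt_two_cosh (u : ℝ) (hu : 1 ≤ u) :
    Real.sqrt (2 * (u - 1)) = 2 * Real.sinh (arcosh u / 2) := by
  have hy := arcosh_nonneg u hu
  have hch := cosh_arcosh u hu
  have h1 := two_cosh_sub (arcosh u)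
  rw [hch] at h1
  have hs : 0 ≤ Real.sinh (arcosh u / 2) := Real.sinh_nonneg_iff.2 (by linarith)
  rw [h1, Real.sqrt_sq (by linarith)]

lemma arcosh_upper (u : ℝ) (hu : 1 ≤ u) : arcosh u ≤ Real.sqrt (2 * (u - 1)) := by
  rw [sqrt_two_cosh u hu]
  have := self_le_sinh (arcosh u / 2) (by linarith [arcosh_nonneg u hu])
  linarith

lemma cosh_half_arcosh (u : ℝ) (hu : 1 ≤ u) :
    Real.cosh (arcosh u / 2) = Real.sqrt ((1 + u) / 2) := by
  have hch := cosh_arcosh u hu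
  have h1 : Real.cosh (2 * (arcosh u / 2)) =
      Real.cosh (arcosh u / 2) ^ 2 + Real.sinh (arcosh u / 2) ^ 2 :=
    Real.cosh_two_mul _
  have h2 : (2:ℝ) * (arcosh u / 2) = arcosh u := by ring
  rw [h2, hch] at h1
  have h3 := Real.cosh_sq_sub_sinh_sq (arcosh u / 2)
  have h4 : (1 + u) / 2 = Real.cosh (arcosh u / 2) ^ 2 := by linarith
  rw [h4, Real.sqrt_sq (Real.cosh_pos _).le]

lemma arcosh_lower (u : ℝ) (hu : 1 ≤ u) :
    Real.sqrt (2 * (u - 1)) / Real.sqrt ((1 + u) / 2) ≤ arcosh u := by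
  rw [sqrt_two_cosh u hu, ← cosh_half_arcosh u hu, div_le_iff₀ (Real.cosh_pos _)]
  have := sinh_le_mul_cosh (arcosh u / 2) (by linarith [arcosh_nonneg u hu])
  nlinarith

lemma key_sph (s t c : ℝ) (hc1 : -1 ≤ c) (hc2 : c ≤ 1) :
    Tendsto (fun h : ℝ => Real.arccos (Real.cos (h*s) * Real.cos (h*t)
        + Real.sin (h*s) * Real.sin (h*t) * c) / h)
      (nhdsWithin 0 (Ioi 0)) (nhds (Real.sqrt (s^2 + t^2 - 2*s*t*c))) := by
  obtain ⟨u, hu_def⟩ : ∃ u : ℝ → ℝ, u = fun h =>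
      Real.cos (h*s) * Real.cos (h*t) + Real.sin (h*s) * Real.sin (h*t) * c := ⟨_, rfl⟩
  have hgoal : (fun h : ℝ => Real.arccos (Real.cos (h*s) * Real.cos (h*t)
      + Real.sin (h*s) * Real.sin (h*t) * c) / h) = fun h => Real.arccos (u h) / h := by
    rw [hu_def]
  rw [hgoal]
  have hα : (0:ℝ) ≤ (1+c)/2 := by linarith
  have hβ : (0:ℝ) ≤ (1-c)/2 := by linarith
  have hid : ∀ h : ℝ, 1 - u h = (1+c)/2 * (1 - Real.cos ((s-t)*h))
      + (1-c)/2 * (1 - Real.cos ((s+t)*h)) := by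
    intro h
    simp only [hu_def]
    rw [sub_mul, add_mul, Real.cos_sub, Real.cos_add, mul_comm s h, mul_comm t h]
    ring
  have hule : ∀ h : ℝ, u h ≤ 1 := by
    intro h
    have h1 : 0 ≤ (1+c)/2 * (1 - Real.cos ((s-t)*h)) :=
      mul_nonneg hα (by linarith [Real.cos_le_one ((s-t)*h)])
    have h2 : 0 ≤ (1-c)/2 * (1 - Real.cos ((s+t)*h)) :=
      mul_nonneg hβ (by linarith [Real.cos_le_one ((s+t)*h)])
    linarith [hid h]
  set F : ℝ → ℝ := fun h => (1+c)/2 * (2 * Real.sin ((s-t)*h/2) / h)^2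
      + (1-c)/2 * (2 * Real.sin ((s+t)*h/2) / h)^2 with hF_def
  have hF : Tendsto F (nhdsWithin 0 (Ioi 0)) (nhds ((1+c)/2 * (s-t)^2 + (1-c)/2 * (s+t)^2)) :=
    (((limA (s-t)).pow 2).const_mul _).add (((limA (s+t)).pow 2).const_mul _)
  have hval : (1+c)/2 * (s-t)^2 + (1-c)/2 * (s+t)^2 = s^2 + t^2 - 2*s*t*c := by ring
  rw [hval] at hF
  have hFnn : ∀ h : ℝ, 0 ≤ F h := fun h =>
    add_nonneg (mul_nonneg hα (sq_nonneg _)) (mul_nonneg hβ (sq_nonneg _))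
  have hL : Tendsto (fun h : ℝ => Real.sqrt (2*(1 - u h)) / h)
      (nhdsWithin 0 (Ioi 0)) (nhds (Real.sqrt (s^2 + t^2 - 2*s*t*c))) := by
    have := (Real.continuous_sqrt.tendsto _).comp hF
    apply this.congr'
    filter_upwards [self_mem_nhdsWithin] with h hh
    have h0 : (0:ℝ) < h := hh
    have h2 : 2*(1 - u h) = F h * h^2 := by
      have e1 := two_sub_cos ((s-t)*h)
      have e2 := two_sub_cos ((s+t)*h)
      rw [hid h]
      simp only [hF_def]
      have key : ∀ x : ℝ, (x / h)^2 * h^2 = x^2 := fun x => by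
        rw [div_pow, div_mul_cancel₀ _ (pow_ne_zero 2 h0.ne')]
      linear_combination (1+c)/2 * e1 + (1-c)/2 * e2 - (1+c)/2 * key (2 * Real.sin ((s-t)*h/2))
        - (1-c)/2 * key (2 * Real.sin ((s+t)*h/2))
    simp only [Function.comp]
    rw [h2, Real.sqrt_mul (hFnn h), Real.sqrt_sq h0.le, mul_div_assoc, div_self h0.ne',
      mul_one]
  have huev : ∀ᶠ h in nhdsWithin (0:ℝ) (Ioi 0), 0 < u h := by
    have hcont : Tendsto u (nhds 0) (nhds (u 0)) :=
      (Continuous.tendsto (by rw [hu_def]; fun_prop) 0)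
    have hu0 : u 0 = 1 := by simp [hu_def]
    rw [hu0] at hcont
    exact (hcont.mono_left nhdsWithin_le_nhds).eventually (eventually_gt_nhds zero_lt_one)
  have hUt : Tendsto (fun h : ℝ => (Real.sqrt (2*(1 - u h)) / h) / Real.sqrt ((1 + u h)/2))
      (nhdsWithin 0 (Ioi 0)) (nhds (Real.sqrt (s^2 + t^2 - 2*s*t*c))) := by
    have hden : Tendsto (fun h : ℝ => Real.sqrt ((1 + u h)/2)) (nhdsWithin 0 (Ioi 0)) (nhds 1) := by
      have hcont : Tendsto (fun h : ℝ => Real.sqrt ((1 + u h)/2)) (nhds 0)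
          (nhds (Real.sqrt ((1 + u 0)/2))) :=
        (Continuous.tendsto (by rw [hu_def]; fun_prop) 0)
      have hu0 : Real.sqrt ((1 + u 0)/2) = 1 := by simp [hu_def]
      rw [hu0] at hcont
      exact hcont.mono_left nhdsWithin_le_nhds
    have := hL.div hden one_ne_zero
    rw [div_one] at this
    exact this
  apply tendsto_of_tendsto_of_tendsto_of_le_of_le' hL hUt
  · filter_upwards [huev, self_mem_nhdsWithin] with h hpos hh
    have h0 : (0:ℝ) < h := hh
    exact div_le_div_of_nonneg_right (arccos_lower (u h) (by linarith) (hule h)) h0.le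
  · filter_upwards [huev, self_mem_nhdsWithin] with h hpos hh
    have h0 : (0:ℝ) < h := hh
    have hb := arccos_upper (u h) hpos (hule h)
    calc Real.arccos (u h) / h
        ≤ (Real.sqrt (2*(1 - u h)) / Real.sqrt ((1 + u h)/2)) / h :=
          div_le_div_of_nonneg_right hb h0.le
      _ = (Real.sqrt (2*(1 - u h)) / h) / Real.sqrt ((1 + u h)/2) := div_right_comm _ _ _

lemma key_hyp (s t c : ℝ) (hc1 : -1 ≤ c) (hc2 : c ≤ 1) :
    Tendsto (fun h : ℝ => arcosh (Real.cosh (h*s) * Real.cosh (h*t)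
        - Real.sinh (h*s) * Real.sinh (h*t) * c) / h)
      (nhdsWithin 0 (Ioi 0)) (nhds (Real.sqrt (s^2 + t^2 - 2*s*t*c))) := by
  obtain ⟨u, hu_def⟩ : ∃ u : ℝ → ℝ, u = fun h =>
      Real.cosh (h*s) * Real.cosh (h*t) - Real.sinh (h*s) * Real.sinh (h*t) * c := ⟨_, rfl⟩
  have hgoal : (fun h : ℝ => arcosh (Real.cosh (h*s) * Real.cosh (h*t)
      - Real.sinh (h*s) * Real.sinh (h*t) * c) / h) = fun h => arcosh (u h) / h := by
    rw [hu_def]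
  rw [hgoal]
  have hα : (0:ℝ) ≤ (1+c)/2 := by linarith
  have hβ : (0:ℝ) ≤ (1-c)/2 := by linarith
  have hid : ∀ h : ℝ, u h - 1 = (1+c)/2 * (Real.cosh ((s-t)*h) - 1)
      + (1-c)/2 * (Real.cosh ((s+t)*h) - 1) := by
    intro h
    simp only [hu_def]
    rw [sub_mul, add_mul, Real.cosh_sub, Real.cosh_add, mul_comm s h, mul_comm t h]
    ring
  have hule : ∀ h : ℝ, 1 ≤ u h := by
    intro h
    have h1 : 0 ≤ (1+c)/2 * (Real.cosh ((s-t)*h) - 1) :=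
      mul_nonneg hα (by linarith [Real.one_le_cosh ((s-t)*h)])
    have h2 : 0 ≤ (1-c)/2 * (Real.cosh ((s+t)*h) - 1) :=
      mul_nonneg hβ (by linarith [Real.one_le_cosh ((s+t)*h)])
    linarith [hid h]
  obtain ⟨F, hF_def⟩ : ∃ F : ℝ → ℝ, F = fun h => (1+c)/2 * (2 * Real.sinh ((s-t)*h/2) / h)^2
      + (1-c)/2 * (2 * Real.sinh ((s+t)*h/2) / h)^2 := ⟨_, rfl⟩
  have hF : Tendsto F (nhdsWithin 0 (Ioi 0)) (nhds ((1+c)/2 * (s-t)^2 + (1-c)/2 * (s+t)^2)) := by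
    rw [hF_def]
    exact (((limB (s-t)).pow 2).const_mul _).add (((limB (s+t)).pow 2).const_mul _)
  have hval : (1+c)/2 * (s-t)^2 + (1-c)/2 * (s+t)^2 = s^2 + t^2 - 2*s*t*c := by ring
  rw [hval] at hF
  have hFnn : ∀ h : ℝ, 0 ≤ F h := by
    intro h
    rw [hF_def]
    exact add_nonneg (mul_nonneg hα (sq_nonneg _)) (mul_nonneg hβ (sq_nonneg _))
  have hL : Tendsto (fun h : ℝ => Real.sqrt (2*(u h - 1)) / h)
      (nhdsWithin 0 (Ioi 0)) (nhds (Real.sqrt (s^2 + t^2 - 2*s*t*c))) := by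
    have := (Real.continuous_sqrt.tendsto _).comp hF
    apply this.congr'
    filter_upwards [self_mem_nhdsWithin] with h hh
    have h0 : (0:ℝ) < h := hh
    have h2 : 2*(u h - 1) = F h * h^2 := by
      have e1 := two_cosh_sub ((s-t)*h)
      have e2 := two_cosh_sub ((s+t)*h)
      rw [hid h, hF_def]
      beta_reduce
      have key : ∀ x : ℝ, (x / h)^2 * h^2 = x^2 := fun x => by
        rw [div_pow, div_mul_cancel₀ _ (pow_ne_zero 2 h0.ne')]
      linear_combination (1+c)/2 * e1 + (1-c)/2 * e2 - (1+c)/2 * key (2 * Real.sinh ((s-t)*h/2))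
        - (1-c)/2 * key (2 * Real.sinh ((s+t)*h/2))
    simp only [Function.comp]
    rw [h2, Real.sqrt_mul (hFnn h), Real.sqrt_sq h0.le, mul_div_assoc, div_self h0.ne',
      mul_one]
  have hUt : Tendsto (fun h : ℝ => (Real.sqrt (2*(u h - 1)) / h) / Real.sqrt ((1 + u h)/2))
      (nhdsWithin 0 (Ioi 0)) (nhds (Real.sqrt (s^2 + t^2 - 2*s*t*c))) := by
    have hden : Tendsto (fun h : ℝ => Real.sqrt ((1 + u h)/2)) (nhdsWithin 0 (Ioi 0)) (nhds 1) := by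
      have hcont : Tendsto (fun h : ℝ => Real.sqrt ((1 + u h)/2)) (nhds 0)
          (nhds (Real.sqrt ((1 + u 0)/2))) :=
        (Continuous.tendsto (by rw [hu_def]; fun_prop) 0)
      have hu0 : Real.sqrt ((1 + u 0)/2) = 1 := by simp [hu_def]
      rw [hu0] at hcont
      exact hcont.mono_left nhdsWithin_le_nhds
    have := hL.div hden one_ne_zero
    rw [div_one] at this
    exact this
  apply tendsto_of_tendsto_of_tendsto_of_le_of_le' hUt hL
  · filter_upwards [self_mem_nhdsWithin] with h hh
    have h0 : (0:ℝ) < h := hh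
    have hb := arcosh_lower (u h) (hule h)
    calc (Real.sqrt (2*(u h - 1)) / h) / Real.sqrt ((1 + u h)/2)
        = (Real.sqrt (2*(u h - 1)) / Real.sqrt ((1 + u h)/2)) / h := (div_right_comm _ _ _).symm
      _ ≤ arcosh (u h) / h := div_le_div_of_nonneg_right hb h0.le
  · filter_upwards [self_mem_nhdsWithin] with h hh
    have h0 : (0:ℝ) < h := hh
    exact div_le_div_of_nonneg_right (arcosh_upper (u h) (hule h)) h0.le

/-- For fixed `s, t ≥ 0` and `θ ∈ [0,π]`, the `(κ,N)`-cone distance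
formula converges, as `κ → 0` (κ ≠ 0), to the Euclidean cone distance
`sqrt(s² + t² - 2st·cos θ)`. -/
theorem statement13 (s t : ℝ) (hs : 0 ≤ s) (ht : 0 ≤ t) (θ : ℝ) (hθ : θ ∈ Icc (0:ℝ) Real.pi) :
    Tendsto (fun κ : ℝ => CkInv κ (Ck κ s * Ck κ t + κ * Sk κ s * Sk κ t * Real.cos θ))
      (nhdsWithin (0:ℝ) {(0:ℝ)}ᶜ)
      (nhds (Real.sqrt (s^2 + t^2 - 2*s*t*Real.cos θ))) := by
  have hc1 : -1 ≤ Real.cos θ := Real.neg_one_le_cos θ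
  have hc2 : Real.cos θ ≤ 1 := Real.cos_le_one θ
  rw [← nhdsLT_sup_nhdsGT (0:ℝ), tendsto_sup]
  constructor
  · -- κ < 0
    have hmap : Tendsto (fun κ : ℝ => Real.sqrt (-κ)) (nhdsWithin 0 (Iio 0))
        (nhdsWithin 0 (Ioi 0)) := by
      rw [tendsto_nhdsWithin_iff]
      constructor
      · have : Tendsto (fun κ : ℝ => Real.sqrt (-κ)) (nhds 0) (nhds (Real.sqrt (-0))) :=
          (Real.continuous_sqrt.comp continuous_neg).tendsto 0
        simpa using this.mono_left nhdsWithin_le_nhds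
      · filter_upwards [self_mem_nhdsWithin] with κ hκ
        have : κ < 0 := hκ
        exact Real.sqrt_pos.2 (by linarith)
    have hT := (key_hyp s t (Real.cos θ) hc1 hc2).comp hmap
    apply Tendsto.congr' _ hT
    filter_upwards [self_mem_nhdsWithin] with κ hκ
    have hκ0 : κ < 0 := hκ
    have hnotpos : ¬ 0 < κ := by linarith
    have hsq : Real.sqrt (-κ) * Real.sqrt (-κ) = -κ := Real.mul_self_sqrt (by linarith)
    have hne : Real.sqrt (-κ) ≠ 0 := ne_of_gt (Real.sqrt_pos.2 (by linarith))
    simp only [Function.comp, Ck, Sk, CkInv, if_neg hnotpos]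
    have harg : Real.cosh (Real.sqrt (-κ)*s) * Real.cosh (Real.sqrt (-κ)*t)
        + κ * (Real.sinh (Real.sqrt (-κ)*s)/Real.sqrt (-κ))
          * (Real.sinh (Real.sqrt (-κ)*t)/Real.sqrt (-κ)) * Real.cos θ
        = Real.cosh (Real.sqrt (-κ)*s) * Real.cosh (Real.sqrt (-κ)*t)
        - Real.sinh (Real.sqrt (-κ)*s) * Real.sinh (Real.sqrt (-κ)*t) * Real.cos θ := by
      field_simp
      linear_combination (Real.sinh (Real.sqrt (-κ)*s) * Real.sinh (Real.sqrt (-κ)*t)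
        * Real.cos θ) * hsq
    rw [harg]
  · -- κ > 0
    have hmap : Tendsto (fun κ : ℝ => Real.sqrt κ) (nhdsWithin 0 (Ioi 0))
        (nhdsWithin 0 (Ioi 0)) := by
      rw [tendsto_nhdsWithin_iff]
      constructor
      · have : Tendsto (fun κ : ℝ => Real.sqrt κ) (nhds 0) (nhds (Real.sqrt 0)) :=
          Real.continuous_sqrt.tendsto 0
        simpa using this.mono_left nhdsWithin_le_nhds
      · filter_upwards [self_mem_nhdsWithin] with κ hκ
        have : (0:ℝ) < κ := hκ
        exact Real.sqrt_pos.2 this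
    have hT := (key_sph s t (Real.cos θ) hc1 hc2).comp hmap
    apply Tendsto.congr' _ hT
    filter_upwards [self_mem_nhdsWithin] with κ hκ
    have hκ0 : (0:ℝ) < κ := hκ
    have hsq : Real.sqrt κ * Real.sqrt κ = κ := Real.mul_self_sqrt hκ0.le
    have hne : Real.sqrt κ ≠ 0 := ne_of_gt (Real.sqrt_pos.2 hκ0)
    simp only [Function.comp, Ck, Sk, CkInv, if_pos hκ0]
    have harg : Real.cos (Real.sqrt κ*s) * Real.cos (Real.sqrt κ*t)
        + κ * (Real.sin (Real.sqrt κ*s)/Real.sqrt κ)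
          * (Real.sin (Real.sqrt κ*t)/Real.sqrt κ) * Real.cos θ
        = Real.cos (Real.sqrt κ*s) * Real.cos (Real.sqrt κ*t)
        + Real.sin (Real.sqrt κ*s) * Real.sin (Real.sqrt κ*t) * Real.cos θ := by
      field_simp
      linear_combination (-(Real.sin (Real.sqrt κ*s) * Real.sin (Real.sqrt κ*t) * Real.cos θ)) * hsq
    rw [harg]
end
end

section
/- Let (M,d,m) be a metric measure space satisfying the curvature-dimension condition CD(K,N) for some K ∈ ℝ and N ∈ [1,∞). Then the measure m has no atoms, i.e. m({x}) = 0 for every x ∈ M. -/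
open MeasureTheory Set Filter
open scoped ENNReal NNReal

noncomputable section

namespace PaperCD

variable {X : Type*}

/-- A (constant-speed, defined on `[0,1]`) geodesic with respect to a distance function `ρ`. -/
def IsGeodesicWrt (ρ : X → X → ℝ) (γ : ℝ → X) : Prop :=
  ∀ s ∈ Icc (0:ℝ) 1, ∀ t ∈ Icc (0:ℝ) 1, ρ (γ s) (γ t) = |s - t| * ρ (γ 0) (γ 1)

/-- `q` is a coupling of the probability measures `μ₀` and `μ₁`. -/
def IsCoupling [MeasurableSpace X] (q : Measure (X × X)) (μ₀ μ₁ : Measure X) : Prop :=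
  IsProbabilityMeasure q ∧ q.map Prod.fst = μ₀ ∧ q.map Prod.snd = μ₁

/-- Quadratic transport cost of a coupling w.r.t. the distance `ρ`. -/
def cost (ρ : X → X → ℝ) [MeasurableSpace X] (q : Measure (X × X)) : ℝ≥0∞ :=
  ∫⁻ p, ENNReal.ofReal (ρ p.1 p.2 ^ 2) ∂q

/-- The squared L²-Wasserstein distance w.r.t. the distance `ρ`. -/
def W2sq (ρ : X → X → ℝ) [MeasurableSpace X] (μ₀ μ₁ : Measure X) : ℝ≥0∞ :=
  ⨅ (q : Measure (X × X)) (_ : IsCoupling q μ₀ μ₁), cost ρ q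

/-- `q` is an optimal coupling of `μ₀` and `μ₁`. -/
def IsOptimalCoupling (ρ : X → X → ℝ) [MeasurableSpace X]
    (q : Measure (X × X)) (μ₀ μ₁ : Measure X) : Prop :=
  IsCoupling q μ₀ μ₁ ∧ cost ρ q = W2sq ρ μ₀ μ₁

/-- An optimal path measure (dynamical optimal transference plan): a probability measure on
curves which is concentrated on geodesics and whose joint endpoint distribution is an
optimal coupling of its two endpoint distributions. -/
def IsOptimalPathMeasure (ρ : X → X → ℝ) [MeasurableSpace X] (ν : Measure (ℝ → X)) : Prop :=
  IsProbabilityMeasure ν ∧ ν {γ | ¬ IsGeodesicWrt ρ γ} = 0 ∧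
  IsOptimalCoupling ρ (ν.map fun γ => (γ 0, γ 1)) (ν.map fun γ => γ 0) (ν.map fun γ => γ 1)

/-- Support of a measure w.r.t. a distance function: points all of whose `ρ`-balls have
positive measure. -/
def suppWrt {Y : Type*} [MeasurableSpace Y] (ρ : Y → Y → ℝ) (μ : Measure Y) : Set Y :=
  {y | ∀ ε > 0, 0 < μ {z | ρ y z < ε}}

/-- Uniform distance on paths (over the parameter interval `[0,1]`). -/
def pathDist (ρ : X → X → ℝ) (γ γ' : ℝ → X) : ℝ :=
  ⨆ t : Icc (0:ℝ) 1, ρ (γ t.1) (γ' t.1)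

/-- The volume distortion coefficients `τ_{K,N}^{(t)}(θ)`. -/
def tau (K N t θ : ℝ) : ℝ≥0∞ :=
  if K = 0 ∨ θ = 0 then ENNReal.ofReal t
  else if 0 < K then
    if N = 1 then ∞
    else if θ < Real.sqrt ((N-1)/K) * Real.pi then
      ENNReal.ofReal (t ^ (1/N) *
        (Real.sin (Real.sqrt (K/(N-1)) * (t*θ)) / Real.sin (Real.sqrt (K/(N-1)) * θ)) ^ (1 - 1/N))
    else ∞
  else
    ENNReal.ofReal (t ^ (1/N) *
      (Real.sinh (Real.sqrt (-K/(N-1)) * (t*θ)) / Real.sinh (Real.sqrt (-K/(N-1)) * θ)) ^ (1 - 1/N))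

/-- Membership in `P₂(X,ρ,m)`: an `m`-absolutely continuous probability measure with finite
second moment. -/
def memP2 (ρ : X → X → ℝ) [MeasurableSpace X] (m μ : Measure X) : Prop :=
  IsProbabilityMeasure μ ∧ μ ≪ m ∧ ∃ x₀, ∫⁻ x, ENNReal.ofReal (ρ x₀ x ^ 2) ∂μ < ∞

/-- The curvature-dimension condition `CD(K,N)` of Sturm / Lott–Villani for the metric measure
space `(X,ρ,m)`: for every pair of absolutely continuous probability measures `μᵢ = fᵢ·m` in
`P₂` there are an optimal coupling `q` and a Wasserstein geodesic `t ↦ (f t)·m` in `P₂`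
joining them along which the Rényi entropy inequality with coefficients `τ_{K,N'}` holds. -/
def CD (ρ : X → X → ℝ) [MeasurableSpace X] (m : Measure X) (K N : ℝ) : Prop :=
  ∀ f₀ f₁ : X → ℝ≥0∞,
    memP2 ρ m (m.withDensity f₀) → memP2 ρ m (m.withDensity f₁) →
    ∃ (q : Measure (X × X)) (f : ℝ → X → ℝ≥0∞),
      IsOptimalCoupling ρ q (m.withDensity f₀) (m.withDensity f₁) ∧
      f 0 = f₀ ∧ f 1 = f₁ ∧
      (∀ t ∈ Icc (0:ℝ) 1, memP2 ρ m (m.withDensity (f t))) ∧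
      (∀ s ∈ Icc (0:ℝ) 1, ∀ t ∈ Icc (0:ℝ) 1,
        W2sq ρ (m.withDensity (f s)) (m.withDensity (f t)) =
          ENNReal.ofReal ((s - t)^2) * W2sq ρ (m.withDensity f₀) (m.withDensity f₁)) ∧
      (∀ t ∈ Ioo (0:ℝ) 1, ∀ N', N ≤ N' →
        (∫⁻ p, tau K N' (1-t) (ρ p.1 p.2) * (f₀ p.1) ^ (-(1/N')) +
               tau K N' t (ρ p.1 p.2) * (f₁ p.2) ^ (-(1/N')) ∂q)
          ≤ ∫⁻ x, (f t x) ^ (1 - 1/N') ∂m)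

/-- `ρ²`-cyclic monotonicity of a set `Ξ ⊆ X × X`. -/
def CyclicallyMonotone (ρ : X → X → ℝ) (Ξ : Set (X × X)) : Prop :=
  ∀ (k : ℕ) (x y : Fin (k+1) → X), (∀ i, (x i, y i) ∈ Ξ) →
    ∑ i, ρ (x i) (y i) ^ 2 ≤ ∑ i, ρ (x i) (y (i + 1)) ^ 2

section Helpers

/-- An `ℝ≥0∞` number below every positive `ofReal` is zero. -/
lemma enn_eq_zero_of_forall {ζ : ℝ≥0∞} (h : ∀ η : ℝ, 0 < η → ζ ≤ ENNReal.ofReal η) : ζ = 0 := by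
  by_contra h0
  rcases eq_or_ne ζ ∞ with hζ | hζ
  · have h1 := h 1 one_pos
    rw [hζ, top_le_iff] at h1
    simp at h1
  · have hpos : 0 < ζ.toReal := ENNReal.toReal_pos h0 hζ
    have h2 := h (ζ.toReal / 2) (by linarith)
    have hlt : ENNReal.ofReal (ζ.toReal / 2) < ζ := by
      conv_rhs => rw [← ENNReal.ofReal_toReal hζ]
      exact (ENNReal.ofReal_lt_ofReal_iff hpos).mpr (by linarith)
    exact (h2.not_gt hlt).elim

variable {α : Type*} [MeasurableSpace α]

/-- If an arbitrary function has zero lintegral, so does any positive power. -/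
lemma lintegral_rpow_eq_zero {ν : Measure α} {f : α → ℝ≥0∞} {a : ℝ} (ha : 0 < a)
    (h : ∫⁻ z, f z ∂ν = 0) : ∫⁻ z, f z ^ a ∂ν = 0 := by
  obtain ⟨g, hgm, hgle, hgeq⟩ := exists_measurable_le_lintegral_eq ν (fun z => f z ^ a)
  rw [hgeq]
  have hmle : ∀ z, g z ^ (1/a) ≤ f z := by
    intro z
    calc g z ^ (1/a) ≤ (f z ^ a) ^ (1/a) := ENNReal.rpow_le_rpow (hgle z) (by positivity)
      _ = f z := by rw [← ENNReal.rpow_mul, mul_one_div_cancel ha.ne', ENNReal.rpow_one]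
  have hginteg : ∫⁻ z, g z ^ (1/a) ∂ν = 0 :=
    le_antisymm (h ▸ lintegral_mono hmle) (zero_le)
  have hgmeas : Measurable fun z => g z ^ (1/a) :=
    (ENNReal.continuous_rpow_const.measurable).comp hgm
  have hzero : ∀ᵐ z ∂ν, g z ^ (1/a) = 0 := (lintegral_eq_zero_iff hgmeas).mp hginteg
  have hg0 : ∀ᵐ z ∂ν, g z = 0 := by
    filter_upwards [hzero] with z hz
    rcases ENNReal.rpow_eq_zero_iff.mp hz with ⟨h1, _⟩ | ⟨_, h2⟩
    · exact h1
    · exact absurd h2 (not_lt.mpr (by positivity))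
  calc ∫⁻ z, g z ∂ν = ∫⁻ z, (0:ℝ≥0∞) ∂ν := lintegral_congr_ae hg0
    _ = 0 := lintegral_zero

/-- reverse Hölder bound for an arbitrary function: `∫ f^a ≤ (∫ f)^a (ν univ)^(1-a)`. -/
lemma lintegral_rpow_le {ν : Measure α} (f : α → ℝ≥0∞) {a : ℝ} (ha : 0 < a) (ha1 : a < 1) :
    ∫⁻ z, f z ^ a ∂ν ≤ (∫⁻ z, f z ∂ν) ^ a * (ν Set.univ) ^ (1 - a) := by
  obtain ⟨g, hgm, hgle, hgeq⟩ := exists_measurable_le_lintegral_eq ν (fun z => f z ^ a)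
  rw [hgeq]
  have hpq : Real.HolderConjugate (1/a) (1/(1-a)) := by
    rw [Real.holderConjugate_iff]; constructor
    · rw [lt_div_iff₀ ha]; linarith
    · rw [one_div, one_div, inv_inv, inv_inv]; ring
  have hH := ENNReal.lintegral_mul_le_Lp_mul_Lq ν hpq hgm.aemeasurable aemeasurable_const
    (f := g) (g := fun _ => (1:ℝ≥0∞))
  simp only [Pi.mul_apply, mul_one, ENNReal.one_rpow, lintegral_const, one_mul] at hH
  have h1 : (∫⁻ z, g z ^ (1/a) ∂ν) ^ (1/(1/a)) ≤ (∫⁻ z, f z ∂ν) ^ a := by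
    rw [one_div_one_div]
    apply ENNReal.rpow_le_rpow _ ha.le
    apply lintegral_mono
    intro z
    calc g z ^ (1/a) ≤ (f z ^ a) ^ (1/a) := ENNReal.rpow_le_rpow (hgle z) (by positivity)
      _ = f z := by rw [← ENNReal.rpow_mul, mul_one_div_cancel ha.ne', ENNReal.rpow_one]
  have h2 : (1:ℝ)/(1/(1-a)) = 1 - a := one_div_one_div _
  calc ∫⁻ z, g z ∂ν ≤ (∫⁻ z, g z ^ (1/a) ∂ν) ^ (1/(1/a)) * (ν univ) ^ (1/(1/(1-a))) := hH
    _ ≤ (∫⁻ z, f z ∂ν) ^ a * (ν univ) ^ (1-a) := by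
        rw [h2]
        exact mul_le_mul_left h1 _

/-- normalized indicator densities are probability densities -/
lemma withDensity_indicator_prob (m : Measure α) {S : Set α} (hS : MeasurableSet S)
    (h0 : m S ≠ 0) (hT : m S ≠ ∞) :
    IsProbabilityMeasure (m.withDensity (S.indicator fun _ => (m S)⁻¹)) := by
  constructor
  rw [withDensity_apply _ MeasurableSet.univ, Measure.restrict_univ, lintegral_indicator hS,
    setLIntegral_const, ENNReal.inv_mul_cancel h0 hT]

lemma withDensity_indicator_compl (m : Measure α) {S : Set α} (hS : MeasurableSet S)
    (c : ℝ≥0∞) : (m.withDensity (S.indicator fun _ => c)) Sᶜ = 0 := by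
  rw [withDensity_apply _ hS.compl]
  have h : ∀ᵐ z ∂m, z ∈ Sᶜ → (S.indicator fun _ => c) z = 0 :=
    ae_of_all _ fun z hz => Set.indicator_of_notMem hz _
  rw [setLIntegral_congr_fun_ae hS.compl h]
  simp

end Helpers

section MetricHelpers

variable {M : Type*} [MetricSpace M] [MeasurableSpace M] [BorelSpace M]

/-- second moment bound for measures with essentially bounded support -/
lemma moment_bound {μ : Measure M} [IsProbabilityMeasure μ] {S : Set M} {x : M} {C : ℝ}
    (hSc : μ Sᶜ = 0) (hbound : ∀ w ∈ S, dist x w ≤ C) :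
    ∫⁻ w, ENNReal.ofReal (dist x w ^ 2) ∂μ ≤ ENNReal.ofReal (C^2) := by
  have hae : ∀ᵐ w ∂μ, w ∈ S := by
    rw [ae_iff]
    exact hSc
  calc ∫⁻ w, ENNReal.ofReal (dist x w ^ 2) ∂μ
      ≤ ∫⁻ _, ENNReal.ofReal (C^2) ∂μ := by
        refine lintegral_mono_ae (hae.mono fun w hw => ENNReal.ofReal_le_ofReal ?_)
        have h1 := hbound w hw
        have h2 := dist_nonneg (x := x) (y := w)
        nlinarith
    _ = ENNReal.ofReal (C^2) := by rw [lintegral_const, measure_univ, mul_one]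

lemma cost_of_dirac_coupling {x : M} {μ0 ν : Measure M} {q : Measure (M × M)}
    (hx : μ0 {x}ᶜ = 0) (hq : IsCoupling q μ0 ν) :
    cost dist q = ∫⁻ z, ENNReal.ofReal (dist x z ^ 2) ∂ν := by
  have h1 : q {p : M × M | ¬ p.1 = x} = 0 := by
    have h2 : q (Prod.fst ⁻¹' {x}ᶜ) = μ0 {x}ᶜ := by
      rw [← hq.2.1, Measure.map_apply measurable_fst (measurableSet_singleton x).compl]
    have h3 : (Prod.fst ⁻¹' ({x}ᶜ : Set M) : Set (M × M)) = {p : M × M | ¬ p.1 = x} := by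
      ext p; simp
    rw [← h3, h2, hx]
  have h2 : ∀ᵐ p ∂q, p.1 = x := by
    rw [ae_iff]; exact h1
  have hmeas : Measurable fun z : M => ENNReal.ofReal (dist x z ^ 2) := by
    apply Measurable.ennreal_ofReal
    exact ((continuous_const.dist continuous_id).pow 2).measurable
  calc cost dist q = ∫⁻ p, ENNReal.ofReal (dist x p.2 ^ 2) ∂q := by
        unfold cost
        refine lintegral_congr_ae ?_
        filter_upwards [h2] with p hp
        rw [hp]
    _ = ∫⁻ z, ENNReal.ofReal (dist x z ^ 2) ∂(q.map Prod.snd) :=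
        (lintegral_map hmeas measurable_snd).symm
    _ = _ := by rw [hq.2.2]

lemma w2sq_dirac {x : M} {μ0 ν : Measure M} (hμ0 : IsProbabilityMeasure μ0)
    (hν : IsProbabilityMeasure ν) (hx : μ0 {x}ᶜ = 0) :
    W2sq dist μ0 ν = ∫⁻ z, ENNReal.ofReal (dist x z ^ 2) ∂ν := by
  have hcpl : IsCoupling (μ0.prod ν) μ0 ν := by
    refine ⟨inferInstance, ?_, ?_⟩
    · rw [Measure.map_fst_prod]; simp
    · rw [Measure.map_snd_prod]; simp
  apply le_antisymm
  · calc W2sq dist μ0 ν ≤ cost dist (μ0.prod ν) := iInf₂_le (μ0.prod ν) hcpl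
      _ = _ := cost_of_dirac_coupling hx hcpl
  · exact le_iInf₂ fun q hq => (cost_of_dirac_coupling hx hq).ge

end MetricHelpers

section TauHelper

lemma tau_lower {K N' s θ R1 R2 L : ℝ} (hN' : 2 ≤ N') (hs : 0 < s) (hs1 : s ≤ 1)
    (hR1 : 0 < R1) (hθ1 : R1 ≤ θ) (hθ2 : θ ≤ R2)
    (hL : L = if K < 0 then
        min 1 (Real.sqrt (-K/(N'-1)) * R1 / Real.sinh (Real.sqrt (-K/(N'-1)) * R2)) else 1) :
    ENNReal.ofReal (s^2 * L) ≤ tau K N' s θ := by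
  have hθ0 : 0 < θ := lt_of_lt_of_le hR1 hθ1
  have hN'1 : (1:ℝ) < N' := by linarith
  have hN'sub : (0:ℝ) < N' - 1 := by linarith
  have hiN : (0:ℝ) < 1/N' := by positivity
  have hexp0 : (0:ℝ) ≤ 1 - 1/N' := by
    have : 1/N' ≤ 1 := by
      rw [div_le_one (by linarith)]; linarith
    linarith
  have hexp1 : 1 - 1/N' ≤ 1 := by linarith
  unfold tau
  split_ifs with h1 h2 h3 h4
  · rcases h1 with hK | hθ
    · have hLval : L = 1 := by rw [hL, if_neg (by rw [hK]; exact lt_irrefl 0)]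
      rw [hLval]
      apply ENNReal.ofReal_le_ofReal
      nlinarith
    · exact absurd hθ hθ0.ne'
  · exact le_top
  · have hLval : L = 1 := by rw [hL, if_neg (not_lt.mpr h2.le)]
    set lv := Real.sqrt (K/(N'-1)) with hlv
    have hlv0 : 0 < lv := Real.sqrt_pos.mpr (by positivity)
    set aθ := lv * θ with haθdef
    have haθ : 0 < aθ := by positivity
    have hmul1 : lv * Real.sqrt ((N'-1)/K) = 1 := by
      rw [hlv, ← Real.sqrt_mul (by positivity)]
      rw [show K/(N'-1) * ((N'-1)/K) = 1 by field_simp]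
      exact Real.sqrt_one
    have haπ : aθ < Real.pi := by
      have := mul_lt_mul_of_pos_left h4 hlv0
      rw [← mul_assoc, hmul1, one_mul] at this
      exact this
    have hsin : 0 < Real.sin aθ := Real.sin_pos_of_pos_of_lt_pi haθ haπ
    have hconc : s * Real.sin aθ ≤ Real.sin (s * aθ) := by
      have hmem1 : aθ ∈ Icc (0:ℝ) Real.pi := ⟨haθ.le, haπ.le⟩
      have hmem2 : (0:ℝ) ∈ Icc (0:ℝ) Real.pi := ⟨le_refl _, Real.pi_pos.le⟩
      have h := strictConcaveOn_sin_Icc.concaveOn.2 hmem1 hmem2 hs.le (by linarith : (0:ℝ) ≤ 1 - s)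
        (by ring)
      simp only [smul_eq_mul, Real.sin_zero, mul_zero, add_zero] at h
      exact h
    have hsaθ : lv * (s * θ) = s * aθ := by rw [haθdef]; ring
    rw [hsaθ]
    apply ENNReal.ofReal_le_ofReal
    have hratio : s ≤ Real.sin (s * aθ) / Real.sin aθ := (le_div_iff₀ hsin).mpr hconc
    have hB : s ^ (1 - 1/N') ≤ (Real.sin (s*aθ) / Real.sin aθ) ^ (1 - 1/N') :=
      Real.rpow_le_rpow hs.le hratio hexp0
    have hAB : s ^ (1/N') * s ^ (1 - 1/N') ≤
        s ^ (1/N') * (Real.sin (s*aθ) / Real.sin aθ) ^ (1 - 1/N') :=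
      mul_le_mul_of_nonneg_left hB (Real.rpow_nonneg hs.le _)
    have hss : s ^ (1/N') * s ^ (1 - 1/N') = s := by
      rw [← Real.rpow_add hs]
      norm_num
    rw [hss] at hAB
    rw [hLval]
    nlinarith
  · exact le_top
  · have hK : K < 0 := by
      rcases lt_trichotomy K 0 with h | h | h
      · exact h
      · exact absurd (Or.inl h) h1
      · exact absurd h h2
    set lv := Real.sqrt (-K/(N'-1)) with hlv
    have hlv0 : 0 < lv := Real.sqrt_pos.mpr (div_pos (by linarith) hN'sub)
    have hsinhR2 : 0 < Real.sinh (lv * R2) := by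
      rw [Real.sinh_pos_iff]; exact mul_pos hlv0 (by linarith)
    have hsinhθ : 0 < Real.sinh (lv * θ) := by
      rw [Real.sinh_pos_iff]; exact mul_pos hlv0 hθ0
    set Lb := min 1 (lv * R1 / Real.sinh (lv * R2)) with hLb
    have hLval : L = Lb := by rw [hL, if_pos hK]
    have hLb0 : 0 < Lb := lt_min one_pos (by positivity)
    have hLb1 : Lb ≤ 1 := min_le_left _ _
    have hnum : s * (lv * R1) ≤ Real.sinh (lv * (s * θ)) := by
      have h1' : lv * (s * θ) ≤ Real.sinh (lv * (s * θ)) :=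
        (Real.self_le_sinh_iff).mpr (by positivity)
      have h2' : s * (lv * R1) ≤ lv * (s * θ) := by
        have := mul_le_mul_of_nonneg_left hθ1 (by positivity : (0:ℝ) ≤ lv * s)
        nlinarith
      linarith
    have hden : Real.sinh (lv * θ) ≤ Real.sinh (lv * R2) :=
      Real.sinh_le_sinh.mpr (mul_le_mul_of_nonneg_left hθ2 hlv0.le)
    have hratio : s * Lb ≤ Real.sinh (lv * (s * θ)) / Real.sinh (lv * θ) := by
      have step : s * (lv * R1) / Real.sinh (lv * R2) ≤
          Real.sinh (lv * (s * θ)) / Real.sinh (lv * θ) :=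
        div_le_div₀ (by positivity) hnum hsinhθ hden
      have step2 : s * Lb ≤ s * (lv * R1 / Real.sinh (lv * R2)) :=
        mul_le_mul_of_nonneg_left (min_le_right _ _) hs.le
      calc s * Lb ≤ s * (lv * R1 / Real.sinh (lv * R2)) := step2
        _ = s * (lv * R1) / Real.sinh (lv * R2) := by ring
        _ ≤ _ := step
    have hsL0 : 0 < s * Lb := by positivity
    have hsL1 : s * Lb ≤ 1 := mul_le_one₀ hs1 hLb0.le hLb1
    apply ENNReal.ofReal_le_ofReal
    have hB1 : (s * Lb) ^ (1 - 1/N') ≤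
        (Real.sinh (lv * (s * θ)) / Real.sinh (lv * θ)) ^ (1 - 1/N') :=
      Real.rpow_le_rpow hsL0.le hratio hexp0
    have hB2 : (s * Lb) ^ (1:ℝ) ≤ (s * Lb) ^ (1 - 1/N') :=
      Real.rpow_le_rpow_of_exponent_ge hsL0 hsL1 (by linarith)
    rw [Real.rpow_one] at hB2
    have hA : s ^ (1:ℝ) ≤ s ^ (1/N') := by
      apply Real.rpow_le_rpow_of_exponent_ge hs hs1
      rw [div_le_one (by linarith)]; linarith
    rw [Real.rpow_one] at hA
    have hfin : s * (s * Lb) ≤ s ^ (1/N') *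
        (Real.sinh (lv * (s * θ)) / Real.sinh (lv * θ)) ^ (1 - 1/N') := by
      apply mul_le_mul hA (le_trans hB2 hB1) (by positivity) (Real.rpow_nonneg hs.le _)
    rw [hLval]
    nlinarith

end TauHelper

section ConcHelper

variable {M : Type*} [MetricSpace M] [MeasurableSpace M] [BorelSpace M]

/-- concentration of intermediate measures on annuli -/
lemma conc {μt μ1 : Measure M} {x : M}
    {t R1 R2 : ℝ} {Wr : ℝ≥0∞} (ht : 0 < t) (ht1 : t < 1) (hR1 : 0 ≤ R1) (hR12 : R1 ≤ R2)
    (hWfin : Wr ≠ ∞)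
    (h1supp : μ1 {w | dist x w < R1 ∨ R2 < dist x w} = 0)
    (hW1 : ∫⁻ w, ENNReal.ofReal (dist x w ^ 2) ∂μ1 = Wr)
    (hWt : ∫⁻ z, ENNReal.ofReal (dist x z ^ 2) ∂μt = ENNReal.ofReal (t^2) * Wr)
    (hW2 : W2sq dist μt μ1 = ENNReal.ofReal ((1-t)^2) * Wr) :
    μt {z | dist x z < t * R1 ∨ t * R2 < dist x z} = 0 := by
  have hdm : Measurable fun z : M => dist x z := (continuous_const.dist continuous_id).measurable
  have hmono : ∀ r : ℝ, MeasurableSet {z : M | r ≤ dist x z} :=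
    fun r => measurableSet_le measurable_const hdm
  have hmono' : ∀ r : ℝ, MeasurableSet {z : M | dist x z ≤ r} :=
    fun r => measurableSet_le hdm measurable_const
  have hdm2 : Measurable fun z : M => ENNReal.ofReal (dist x z ^ 2) :=
    (hdm.pow_const 2).ennreal_ofReal
  -- the key tail estimate
  have key : ∀ δ : ℝ, 0 < δ →
      μt {z | t * R2 + δ ≤ dist x z} = 0 ∧ μt {z | dist x z ≤ t * R1 - δ} = 0 := by
    intro δ hδ
    have main : ∀ η : ℝ, 0 < η →
        μt {z | t * R2 + δ ≤ dist x z} ≤ ENNReal.ofReal η ∧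
        μt {z | dist x z ≤ t * R1 - δ} ≤ ENNReal.ofReal η := by
      intro η hη
      set R : ℝ≥0∞ := ENNReal.ofReal ((1-t)^2) * Wr with hR
      have hRfin : R ≠ ∞ := ENNReal.mul_ne_top ENNReal.ofReal_ne_top hWfin
      set η' : ℝ := δ^2 * η / (t * 2) with hη'
      have hη'pos : 0 < η' := by positivity
      have hlt : W2sq dist μt μ1 < R + ENNReal.ofReal η' := by
        rw [hW2]
        exact ENNReal.lt_add_right hRfin (by simp [ENNReal.ofReal_eq_zero]; linarith)
      obtain ⟨q', hq'lt⟩ := iInf_lt_iff.mp hlt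
      obtain ⟨hcpl, hclt⟩ := iInf_lt_iff.mp hq'lt
      have hfst : q'.map Prod.fst = μt := hcpl.2.1
      have hsnd : q'.map Prod.snd = μ1 := hcpl.2.2
      have hprob : IsProbabilityMeasure q' := hcpl.1
      set u : M × M → ℝ := fun p => dist x p.1 with hu
      set v : M × M → ℝ := fun p => dist x p.2 with hv
      have hum : Measurable u := hdm.comp measurable_fst
      have hvm : Measurable v := hdm.comp measurable_snd
      have ha : ∫⁻ p, ENNReal.ofReal (u p ^ 2) ∂q' = ENNReal.ofReal (t^2) * Wr := by
        rw [← hWt, ← hfst, lintegral_map hdm2 measurable_fst]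
      have hb : ∫⁻ p, ENNReal.ofReal (v p ^ 2) ∂q' = Wr := by
        rw [← hW1, ← hsnd, lintegral_map hdm2 measurable_snd]
      have he_le : ∫⁻ p, ENNReal.ofReal ((v p - u p) ^ 2) ∂q' ≤ R + ENNReal.ofReal η' := by
        refine le_trans (lintegral_mono fun p => ?_) hclt.le
        apply ENNReal.ofReal_le_ofReal
        have habs : |v p - u p| ≤ dist p.1 p.2 := by
          have h := abs_dist_sub_le p.2 p.1 x
          rw [dist_comm p.2 p.1] at h
          calc |v p - u p| = |dist p.2 x - dist p.1 x| := by
                rw [hu, hv]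
                simp only [dist_comm x p.1, dist_comm x p.2]
            _ ≤ dist p.1 p.2 := h
        calc (v p - u p)^2 = |v p - u p|^2 := (sq_abs _).symm
          _ ≤ dist p.1 p.2 ^ 2 := by
              apply pow_le_pow_left₀ (abs_nonneg _) habs
      set e := ∫⁻ p, ENNReal.ofReal ((v p - u p) ^ 2) ∂q' with hedef
      set w2 := ∫⁻ p, ENNReal.ofReal (2 * (u p * v p)) ∂q' with hw2def
      set g := ∫⁻ p, ENNReal.ofReal ((u p - t * v p) ^ 2) ∂q' with hgdef
      have hmeas_uv : Measurable fun p => ENNReal.ofReal (2 * (u p * v p)) :=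
        ((measurable_const.mul (hum.mul hvm))).ennreal_ofReal
      have hmeas_vu : Measurable fun p => ENNReal.ofReal ((v p - u p) ^ 2) :=
        (((hvm.sub hum)).pow_const 2).ennreal_ofReal
      have hmeas_utv : Measurable fun p => ENNReal.ofReal ((u p - t * v p) ^ 2) :=
        (((hum.sub (measurable_const.mul hvm))).pow_const 2).ennreal_ofReal
      have hmeas_u2 : Measurable fun p => ENNReal.ofReal (u p ^ 2) :=
        ((hum.pow_const 2)).ennreal_ofReal
      have hmeas_v2 : Measurable fun p => ENNReal.ofReal (v p ^ 2) :=
        ((hvm.pow_const 2)).ennreal_ofReal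
      -- identity 1 : e + w2 = a + b
      have hid1 : e + w2 = ENNReal.ofReal (t^2) * Wr + Wr := by
        have hstep : e + w2 = ∫⁻ p, (ENNReal.ofReal (u p ^ 2) + ENNReal.ofReal (v p ^ 2)) ∂q' := by
          rw [hedef, hw2def, ← lintegral_add_left hmeas_vu]
          apply lintegral_congr
          intro p
          rw [← ENNReal.ofReal_add (by positivity) (by positivity),
            ← ENNReal.ofReal_add (by positivity) (by positivity)]
          congr 1
          ring
        rw [hstep, lintegral_add_left hmeas_u2, ha, hb]
      -- identity 2 : g + t * w2 = a + t^2 * b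
      have hbq : ∫⁻ p, ENNReal.ofReal (t^2 * v p ^ 2) ∂q' = ENNReal.ofReal (t^2) * Wr := by
        rw [← hb, ← lintegral_const_mul _ hmeas_v2]
        apply lintegral_congr
        intro p
        rw [← ENNReal.ofReal_mul (by positivity)]
      have hid2 : g + ENNReal.ofReal t * w2 =
          ENNReal.ofReal (t^2) * Wr + ENNReal.ofReal (t^2) * Wr := by
        have hconst : ENNReal.ofReal t * w2 =
            ∫⁻ p, ENNReal.ofReal (t * (2 * (u p * v p))) ∂q' := by
          rw [hw2def, ← lintegral_const_mul _ hmeas_uv]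
          apply lintegral_congr
          intro p
          rw [← ENNReal.ofReal_mul ht.le]
        have hstep : g + ENNReal.ofReal t * w2 =
            ∫⁻ p, (ENNReal.ofReal (u p ^ 2) + ENNReal.ofReal (t^2 * v p ^ 2)) ∂q' := by
          rw [hconst, hgdef, ← lintegral_add_left hmeas_utv]
          apply lintegral_congr
          intro p
          rw [← ENNReal.ofReal_add (by positivity) (by positivity),
            ← ENNReal.ofReal_add (by positivity) (by positivity)]
          congr 1
          ring
        rw [hstep, lintegral_add_left hmeas_u2, ha, hbq]
      -- finiteness
      have hafin : ENNReal.ofReal (t^2) * Wr ≠ ∞ := ENNReal.mul_ne_top ENNReal.ofReal_ne_top hWfin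
      have habfin : ENNReal.ofReal (t^2) * Wr + Wr ≠ ∞ := ENNReal.add_ne_top.mpr ⟨hafin, hWfin⟩
      have haafin : ENNReal.ofReal (t^2) * Wr + ENNReal.ofReal (t^2) * Wr ≠ ∞ :=
        ENNReal.add_ne_top.mpr ⟨hafin, hafin⟩
      have hefin : e ≠ ∞ :=
        ne_top_of_le_ne_top (ENNReal.add_ne_top.mpr ⟨hRfin, ENNReal.ofReal_ne_top⟩) he_le
      have hw2fin : w2 ≠ ∞ := ne_top_of_le_ne_top habfin (hid1 ▸ le_add_self)
      have hgfin : g ≠ ∞ := ne_top_of_le_ne_top haafin (hid2 ▸ le_self_add)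
      have htwfin : ENNReal.ofReal t * w2 ≠ ∞ := ENNReal.mul_ne_top ENNReal.ofReal_ne_top hw2fin
      -- real versions
      set WR := Wr.toReal with hWR
      have hWrval : (ENNReal.ofReal (t^2) * Wr).toReal = t^2 * WR := by
        rw [ENNReal.toReal_mul, ENNReal.toReal_ofReal (by positivity)]
      have hid1R : e.toReal + w2.toReal = t^2 * WR + WR := by
        have := congrArg ENNReal.toReal hid1
        rwa [ENNReal.toReal_add hefin hw2fin, ENNReal.toReal_add hafin hWfin, hWrval] at this
      have hid2R : g.toReal + t * w2.toReal = t^2 * WR + t^2 * WR := by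
        have := congrArg ENNReal.toReal hid2
        rwa [ENNReal.toReal_add hgfin htwfin, ENNReal.toReal_add hafin hafin, hWrval,
          ENNReal.toReal_mul, ENNReal.toReal_ofReal ht.le] at this
      have heR : e.toReal ≤ (1-t)^2 * WR + η' := by
        have := ENNReal.toReal_mono (ENNReal.add_ne_top.mpr ⟨hRfin, ENNReal.ofReal_ne_top⟩) he_le
        rwa [ENNReal.toReal_add hRfin ENNReal.ofReal_ne_top, ENNReal.toReal_mul,
          ENNReal.toReal_ofReal (by positivity), ENNReal.toReal_ofReal hη'pos.le] at this
      have hWRnn : 0 ≤ WR := ENNReal.toReal_nonneg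
      -- conclude G ≤ t * η'
      have hG : g.toReal ≤ t * η' := by nlinarith [mul_le_mul_of_nonneg_left heR ht.le]
      have hgle : g ≤ ENNReal.ofReal (δ^2) * ENNReal.ofReal (η/2) := by
        rw [← ENNReal.ofReal_mul (by positivity)]
        have : t * η' = δ^2 * (η/2) := by rw [hη']; field_simp
        rw [← this, ← ENNReal.ofReal_toReal hgfin]
        exact ENNReal.ofReal_le_ofReal hG
      -- Chebyshev
      set T : Set (M × M) := {p | δ^2 ≤ (u p - t * v p)^2} with hT
      have hcheb : ENNReal.ofReal (δ^2) * q' T ≤ g := by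
        have h1 := mul_meas_ge_le_lintegral₀ (μ := q') hmeas_utv.aemeasurable (ENNReal.ofReal (δ^2))
        refine le_trans (mul_le_mul_right (measure_mono ?_) _) h1
        intro p hp
        exact ENNReal.ofReal_le_ofReal hp
      have hqT : q' T ≤ ENNReal.ofReal (η/2) := by
        have h2 : ENNReal.ofReal (δ^2) * q' T ≤ ENNReal.ofReal (δ^2) * ENNReal.ofReal (η/2) :=
          le_trans hcheb hgle
        have h0 : ENNReal.ofReal (δ^2) ≠ 0 := by
          simp only [ne_eq, ENNReal.ofReal_eq_zero, not_le]
          positivity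
        exact (ENNReal.mul_le_mul_iff_right h0 ENNReal.ofReal_ne_top).mp h2
      -- bad set
      have hbadmeas : MeasurableSet {w : M | dist x w < R1 ∨ R2 < dist x w} := by
        apply MeasurableSet.union
        · exact measurableSet_lt hdm measurable_const
        · exact measurableSet_lt measurable_const hdm
      set Bad : Set (M × M) := Prod.snd ⁻¹' {w | dist x w < R1 ∨ R2 < dist x w} with hBad
      have hqBad : q' Bad = 0 := by
        rw [hBad, ← Measure.map_apply measurable_snd hbadmeas, hsnd, h1supp]
      -- upper tail
      have hfinal : ∀ S : Set M, MeasurableSet S →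
          (Prod.fst ⁻¹' S ⊆ T ∪ Bad) → μt S ≤ ENNReal.ofReal η := by
        intro S hSm hsub
        have hset : μt S = q' (Prod.fst ⁻¹' S) := by
          rw [← hfst, Measure.map_apply measurable_fst hSm]
        rw [hset]
        have h5 : q' (Prod.fst ⁻¹' S) ≤ q' T + q' Bad :=
          le_trans (measure_mono hsub) (measure_union_le _ _)
        rw [hqBad, add_zero] at h5
        exact le_trans h5 (le_trans hqT (ENNReal.ofReal_le_ofReal (by linarith)))
      constructor
      · refine hfinal _ (hmono _) ?_
        intro p hp
        by_cases hpB : p ∈ Bad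
        · exact Or.inr hpB
        · left
          simp only [hBad, Set.mem_preimage, Set.mem_setOf_eq, not_or, not_lt] at hpB
          have hv2 : v p ≤ R2 := hpB.2
          have hup : t * R2 + δ ≤ u p := hp
          show δ^2 ≤ (u p - t * v p)^2
          have h6 : δ ≤ u p - t * v p := by
            nlinarith [mul_le_mul_of_nonneg_left hv2 ht.le]
          exact pow_le_pow_left₀ hδ.le h6 2
      · refine hfinal _ (hmono' _) ?_
        intro p hp
        by_cases hpB : p ∈ Bad
        · exact Or.inr hpB
        · left
          simp only [hBad, Set.mem_preimage, Set.mem_setOf_eq, not_or, not_lt] at hpB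
          have hv1 : R1 ≤ v p := hpB.1
          have hup : u p ≤ t * R1 - δ := hp
          show δ^2 ≤ (u p - t * v p)^2
          have h6 : δ ≤ t * v p - u p := by
            nlinarith [mul_le_mul_of_nonneg_left hv1 ht.le]
          have h7 : (t * v p - u p)^2 = (u p - t * v p)^2 := by ring
          rw [← h7]
          exact pow_le_pow_left₀ hδ.le h6 2
    exact ⟨enn_eq_zero_of_forall (fun η hη => (main η hη).1),
      enn_eq_zero_of_forall (fun η hη => (main η hη).2)⟩
  -- assemble
  have hup : μt {z | t * R2 < dist x z} = 0 := by
    have hsub : {z : M | t * R2 < dist x z} ⊆ ⋃ k : ℕ, {z | t * R2 + 1/(k+1) ≤ dist x z} := by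
      intro z hz
      simp only [Set.mem_setOf_eq] at hz
      obtain ⟨k, hk⟩ := exists_nat_one_div_lt (show (0:ℝ) < dist x z - t * R2 by linarith)
      exact Set.mem_iUnion.mpr ⟨k, by simp only [Set.mem_setOf_eq]; linarith⟩
    exact measure_mono_null hsub
      (measure_iUnion_null fun k => (key (1/(k+1)) (by positivity)).1)
  have hlow : μt {z | dist x z < t * R1} = 0 := by
    have hsub : {z : M | dist x z < t * R1} ⊆ ⋃ k : ℕ, {z | dist x z ≤ t * R1 - 1/(k+1)} := by
      intro z hz
      simp only [Set.mem_setOf_eq] at hz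
      obtain ⟨k, hk⟩ := exists_nat_one_div_lt (show (0:ℝ) < t * R1 - dist x z by linarith)
      exact Set.mem_iUnion.mpr ⟨k, by simp only [Set.mem_setOf_eq]; linarith⟩
    exact measure_mono_null hsub
      (measure_iUnion_null fun k => (key (1/(k+1)) (by positivity)).2)
  have : {z : M | dist x z < t * R1 ∨ t * R2 < dist x z} =
      {z : M | dist x z < t * R1} ∪ {z : M | t * R2 < dist x z} := rfl
  rw [this]
  exact measure_union_null hlow hup


end ConcHelper

/-- If `(M,d,m)` satisfies the curvature-dimension condition `CD(K,N)`
for some `K ∈ ℝ` and `N ∈ [1,∞)`, then `m` has no atoms. -/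
theorem statement14
    {M : Type*} [MetricSpace M] [CompleteSpace M] [TopologicalSpace.SeparableSpace M]
    [Nontrivial M] [MeasurableSpace M] [BorelSpace M]
    (m : Measure M) [IsLocallyFiniteMeasure m] [m.IsOpenPosMeasure]
    (K N : ℝ) (hN : 1 ≤ N) (hCD : CD dist m K N) :
    ∀ x : M, m {x} = 0 := by
  intro x
  by_contra hx0
  have hc0 : m {x} ≠ 0 := hx0
  -- local finiteness data
  obtain ⟨Ux, hUxmem, hUxfin⟩ := m.finiteAt_nhds x
  have hcT : m {x} ≠ ∞ :=
    ne_top_of_le_ne_top hUxfin.ne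
      (measure_mono (singleton_subset_iff.mpr (mem_of_mem_nhds hUxmem)))
  obtain ⟨rx, hrxpos, hrxsub⟩ := Metric.mem_nhds_iff.mp hUxmem
  obtain ⟨y, hyx⟩ := exists_ne x
  set D := dist x y with hDdef
  have hD0 : 0 < D := dist_pos.mpr (Ne.symm hyx)
  obtain ⟨Uy, hUymem, hUyfin⟩ := m.finiteAt_nhds y
  obtain ⟨ry, hrypos, hrysub⟩ := Metric.mem_nhds_iff.mp hUymem
  set ε : ℝ := min (ry/2) (D/2) with hεdef
  have hε0 : 0 < ε := lt_min (by linarith) (by linarith)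
  have hεry : ε < ry := lt_of_le_of_lt (min_le_left _ _) (by linarith)
  have hεD : ε ≤ D/2 := min_le_right _ _
  set B := Metric.closedBall y ε with hBdef
  have hBmeas : MeasurableSet B := Metric.isClosed_closedBall.measurableSet
  have hBfin : m B ≠ ∞ := by
    refine ne_top_of_le_ne_top hUyfin.ne (measure_mono ?_)
    intro z hz
    exact hrysub (lt_of_le_of_lt hz hεry)
  have hB0 : m B ≠ 0 := by
    have h1 : 0 < m (Metric.ball y ε) := Metric.measure_ball_pos m y hε0
    have h2 : m (Metric.ball y ε) ≤ m B := measure_mono Metric.ball_subset_closedBall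
    exact (lt_of_lt_of_le h1 h2).ne'
  set R1 := D - ε with hR1def
  set R2 := D + ε with hR2def
  have hR1pos : 0 < R1 := by rw [hR1def]; linarith
  have hR2pos : 0 < R2 := by rw [hR2def]; linarith
  have hR12 : R1 ≤ R2 := by rw [hR1def, hR2def]; linarith
  have hdistB : ∀ w ∈ B, R1 ≤ dist x w ∧ dist x w ≤ R2 := by
    intro w hw
    rw [hBdef, Metric.mem_closedBall] at hw
    have hwy : dist y w ≤ ε := by rwa [dist_comm]
    constructor
    · have h1 := dist_triangle x w y
      rw [hR1def]
      have : dist w y = dist y w := dist_comm w y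
      linarith [h1, this]
    · have h2 := dist_triangle x y w
      rw [hR2def]
      linarith
  -- densities and endpoint measures
  set f₀ : M → ℝ≥0∞ := ({x} : Set M).indicator (fun _ => (m {x})⁻¹) with hf₀def
  set f₁ : M → ℝ≥0∞ := B.indicator (fun _ => (m B)⁻¹) with hf₁def
  set μ0 := m.withDensity f₀ with hμ0def
  set μ1 := m.withDensity f₁ with hμ1def
  have hμ0prob : IsProbabilityMeasure μ0 :=
    withDensity_indicator_prob m (measurableSet_singleton x) hc0 hcT
  have hμ1prob : IsProbabilityMeasure μ1 :=
    withDensity_indicator_prob m hBmeas hB0 hBfin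
  have hμ0x : μ0 {x}ᶜ = 0 := withDensity_indicator_compl m (measurableSet_singleton x) _
  have hμ1B : μ1 Bᶜ = 0 := withDensity_indicator_compl m hBmeas _
  -- memP2
  have hm0 : memP2 dist m μ0 := by
    refine ⟨hμ0prob, withDensity_absolutelyContinuous m f₀, x, ?_⟩
    have := moment_bound (μ := μ0) (S := {x}) (x := x) (C := 0) hμ0x
      (fun w hw => by simp [Set.mem_singleton_iff.mp hw])
    exact lt_of_le_of_lt this (by simp)
  have hm1 : memP2 dist m μ1 := by
    refine ⟨hμ1prob, withDensity_absolutelyContinuous m f₁, x, ?_⟩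
    have := moment_bound (μ := μ1) (S := B) (x := x) (C := R2) hμ1B
      (fun w hw => (hdistB w hw).2)
    exact lt_of_le_of_lt this ENNReal.ofReal_lt_top
  -- apply CD
  obtain ⟨q, f, hopt, hf0, hf1, hmem, hgeo, hent⟩ := hCD f₀ f₁ hm0 hm1
  haveI hqprob : IsProbabilityMeasure q := hopt.1.1
  -- the squared Wasserstein distance between the endpoints
  set Wr := W2sq dist μ0 μ1 with hWrdef
  have hWr_eq : Wr = ∫⁻ w, ENNReal.ofReal (dist x w ^ 2) ∂μ1 := w2sq_dirac hμ0prob hμ1prob hμ0x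
  have hμ1ae : ∀ᵐ w ∂μ1, w ∈ B := by rw [ae_iff]; exact hμ1B
  have hWrfin : Wr ≠ ∞ := by
    rw [hWr_eq]
    exact (lt_of_le_of_lt (moment_bound hμ1B (fun w hw => (hdistB w hw).2))
      ENNReal.ofReal_lt_top).ne
  have hμ1supp : μ1 {w | dist x w < R1 ∨ R2 < dist x w} = 0 := by
    refine measure_mono_null ?_ hμ1B
    intro w hw
    simp only [Set.mem_setOf_eq] at hw
    intro hwB
    rcases hw with h | h
    · exact absurd (hdistB w hwB).1 (not_le.mpr h)
    · exact absurd (hdistB w hwB).2 (not_le.mpr h)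
  -- set up the dimensional constant
  set N' : ℝ := N + 1 with hN'def
  have hN'2 : 2 ≤ N' := by rw [hN'def]; linarith
  have hN'1 : (1:ℝ) < N' := by linarith
  have hN'0 : (0:ℝ) < N' := by linarith
  set L : ℝ := if K < 0 then
      min 1 (Real.sqrt (-K/(N'-1)) * R1 / Real.sinh (Real.sqrt (-K/(N'-1)) * R2)) else 1
    with hLdef
  have hL0 : 0 < L := by
    rw [hLdef]
    split_ifs with hK
    · refine lt_min one_pos ?_
      have hlv0 : 0 < Real.sqrt (-K/(N'-1)) := Real.sqrt_pos.mpr (by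
        apply div_pos (by linarith) (by linarith))
      have : 0 < Real.sinh (Real.sqrt (-K/(N'-1)) * R2) := by
        rw [Real.sinh_pos_iff]; positivity
      positivity
    · exact one_pos
  have hL1 : L ≤ 1 := by
    rw [hLdef]
    split_ifs with hK
    · exact min_le_left _ _
    · exact le_refl 1
  set c := m {x} with hcdef
  set ε₀ : ℝ≥0∞ := ENNReal.ofReal (L/4) ^ N' * c with hε₀def
  have hε₀pos : 0 < ε₀ := by
    rw [hε₀def]
    apply ENNReal.mul_pos _ hc0
    · exact (ENNReal.rpow_pos (ENNReal.ofReal_pos.mpr (by linarith)) ENNReal.ofReal_ne_top).ne'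
  -- the annulus sets
  set S : ℕ → Set M := fun n => {z | 0 < dist x z ∧ dist x z ≤ R2 / (n+2)} with hSdef
  have hdm : Measurable fun z : M => dist x z := (continuous_const.dist continuous_id).measurable
  -- main estimate : for every n, ε₀ ≤ m (S n)
  have hmain : ∀ n : ℕ, ε₀ ≤ m (S n) := by
    intro n
    set t : ℝ := 1 / (n + 2) with htdef
    have ht0 : 0 < t := by positivity
    have ht1 : t < 1 := by
      rw [htdef, div_lt_one (by positivity)]
      have : (0:ℝ) ≤ n := Nat.cast_nonneg n
      linarith
    have ht2 : t ≤ 1/2 := by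
      rw [htdef]
      apply div_le_div_of_nonneg_left one_pos.le (by norm_num)
      have : (0:ℝ) ≤ n := Nat.cast_nonneg n
      linarith
    have htIcc : t ∈ Icc (0:ℝ) 1 := ⟨ht0.le, ht1.le⟩
    have h0Icc : (0:ℝ) ∈ Icc (0:ℝ) 1 := ⟨le_refl _, zero_le_one⟩
    have h1Icc : (1:ℝ) ∈ Icc (0:ℝ) 1 := ⟨zero_le_one, le_refl _⟩
    set μt := m.withDensity (f t) with hμtdef
    have hμtprob : IsProbabilityMeasure μt := (hmem t htIcc).1
    -- Wasserstein identities
    have hWt : ∫⁻ z, ENNReal.ofReal (dist x z ^ 2) ∂μt = ENNReal.ofReal (t^2) * Wr := by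
      have hg := hgeo 0 h0Icc t htIcc
      rw [hf0] at hg
      rw [← w2sq_dirac hμ0prob hμtprob hμ0x, hμtdef]
      rw [hg, show ((0:ℝ) - t)^2 = t^2 by ring]
    have hW2 : W2sq dist μt μ1 = ENNReal.ofReal ((1-t)^2) * Wr := by
      have hg := hgeo t htIcc 1 h1Icc
      rw [hf1] at hg
      rw [hμtdef, hg, show (t - 1)^2 = (1-t)^2 by ring]
    have hW1' : ∫⁻ w, ENNReal.ofReal (dist x w ^ 2) ∂μ1 = Wr := hWr_eq.symm
    -- concentration
    have hconc := conc (μt := μt) (μ1 := μ1) (x := x) ht0 ht1 hR1pos.le hR12 hWrfin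
      hμ1supp hW1' hWt hW2
    -- the annulus
    set A : Set M := {z | t * R1 ≤ dist x z ∧ dist x z ≤ t * R2} with hAdef
    have hAmeas : MeasurableSet A :=
      (measurableSet_le measurable_const hdm).inter (measurableSet_le hdm measurable_const)
    have hAcompl : Aᶜ = {z | dist x z < t * R1 ∨ t * R2 < dist x z} := by
      ext z
      simp only [hAdef, Set.mem_compl_iff, Set.mem_setOf_eq, not_and_or, not_le]
    have hμtAc : μt Aᶜ = 0 := by rw [hAcompl]; exact hconc
    -- entropy inequality
    have hEnt := hent t ⟨ht0, ht1⟩ N' (by rw [hN'def]; linarith)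
    -- lower bound for the LHS
    have hq1 : ∀ᵐ p ∂q, p.1 = x := by
      rw [ae_iff]
      have h2 : q (Prod.fst ⁻¹' {x}ᶜ) = μ0 {x}ᶜ := by
        rw [hμ0def, ← hopt.1.2.1, Measure.map_apply measurable_fst (measurableSet_singleton x).compl]
      have h3 : (Prod.fst ⁻¹' ({x}ᶜ : Set M) : Set (M × M)) = {p : M × M | ¬ p.1 = x} := by
        ext p; simp
      rw [← h3, h2, hμ0x]
    have hq2 : ∀ᵐ p ∂q, p.2 ∈ B := by
      rw [ae_iff]
      have h2 : q (Prod.snd ⁻¹' Bᶜ) = μ1 Bᶜ := by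
        rw [hμ1def, ← hopt.1.2.2, Measure.map_apply measurable_snd hBmeas.compl]
      have h3 : (Prod.snd ⁻¹' (Bᶜ : Set M) : Set (M × M)) = {p : M × M | ¬ p.2 ∈ B} := by
        ext p; simp
      rw [← h3, h2, hμ1B]
    have hcinv : ((m {x})⁻¹ : ℝ≥0∞) ^ (-(1/N')) = c ^ (1/N') := by
      rw [ENNReal.inv_rpow, ENNReal.rpow_neg, inv_inv]
    have hLHS : ENNReal.ofReal ((1-t)^2 * L) * c ^ (1/N') ≤
        ∫⁻ p, tau K N' (1-t) (dist p.1 p.2) * f₀ p.1 ^ (-(1/N')) +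
          tau K N' t (dist p.1 p.2) * f₁ p.2 ^ (-(1/N')) ∂q := by
      have hconst : ∫⁻ _, ENNReal.ofReal ((1-t)^2 * L) * c ^ (1/N') ∂q =
          ENNReal.ofReal ((1-t)^2 * L) * c ^ (1/N') := by
        rw [lintegral_const, measure_univ, mul_one]
      rw [← hconst]
      refine lintegral_mono_ae ?_
      filter_upwards [hq1, hq2] with p hp1 hp2
      have hθ := hdistB p.2 hp2
      have hf₀val : f₀ p.1 = (m {x})⁻¹ := by
        rw [hp1, hf₀def, Set.indicator_of_mem (Set.mem_singleton x)]
      have htau : ENNReal.ofReal ((1-t)^2 * L) ≤ tau K N' (1-t) (dist p.1 p.2) := by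
        rw [hp1]
        exact tau_lower hN'2 (by linarith) (by linarith) hR1pos hθ.1 hθ.2 hLdef
      calc ENNReal.ofReal ((1-t)^2 * L) * c ^ (1/N')
          ≤ tau K N' (1-t) (dist p.1 p.2) * c ^ (1/N') := mul_le_mul_left htau _
        _ = tau K N' (1-t) (dist p.1 p.2) * f₀ p.1 ^ (-(1/N')) := by
            rw [hf₀val, hcinv]
        _ ≤ _ := self_le_add_right _ _
    -- upper bound for the RHS
    have hRHS : ∫⁻ z, (f t z) ^ (1 - 1/N') ∂m ≤ (m A) ^ (1/N') := by
      have hsplit : ∫⁻ z, (f t z) ^ (1 - 1/N') ∂m =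
          ∫⁻ z, (f t z) ^ (1 - 1/N') ∂(m.restrict A) +
          ∫⁻ z, (f t z) ^ (1 - 1/N') ∂(m.restrict Aᶜ) := by
        rw [← lintegral_add_measure, Measure.restrict_add_restrict_compl hAmeas]
      have hiN' : (0:ℝ) < 1 - 1/N' := by
        have : 1/N' < 1 := by rw [div_lt_one hN'0]; linarith
        linarith
      have hiN'' : 1 - 1/N' < 1 := by
        have : 0 < 1/N' := by positivity
        linarith
      have hzero : ∫⁻ z, (f t z) ^ (1 - 1/N') ∂(m.restrict Aᶜ) = 0 := by
        apply lintegral_rpow_eq_zero hiN'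
        have : ∫⁻ z, f t z ∂(m.restrict Aᶜ) = μt Aᶜ := by
          rw [hμtdef, withDensity_apply _ hAmeas.compl]
        rw [this, hμtAc]
      have hA1 : ∫⁻ z, f t z ∂(m.restrict A) ≤ 1 := by
        have : ∫⁻ z, f t z ∂(m.restrict A) = μt A := by
          rw [hμtdef, withDensity_apply _ hAmeas]
        rw [this]
        exact prob_le_one
      calc ∫⁻ z, (f t z) ^ (1 - 1/N') ∂m
          = ∫⁻ z, (f t z) ^ (1 - 1/N') ∂(m.restrict A) + 0 := by rw [hsplit, hzero]
        _ = ∫⁻ z, (f t z) ^ (1 - 1/N') ∂(m.restrict A) := by rw [add_zero]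
        _ ≤ (∫⁻ z, f t z ∂(m.restrict A)) ^ (1 - 1/N') *
            ((m.restrict A) Set.univ) ^ (1 - (1 - 1/N')) := lintegral_rpow_le _ hiN' hiN''
        _ ≤ 1 ^ (1 - 1/N') * (m A) ^ (1/N') := by
            rw [show (1:ℝ) - (1 - 1/N') = 1/N' by ring, Measure.restrict_apply_univ]
            exact mul_le_mul_left (ENNReal.rpow_le_rpow hA1 (by linarith)) _
        _ = (m A) ^ (1/N') := by rw [ENNReal.one_rpow, one_mul]
    -- combine
    have hchain : ENNReal.ofReal (L/4) * c ^ (1/N') ≤ (m A) ^ (1/N') := by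
      have h1 : ENNReal.ofReal (L/4) ≤ ENNReal.ofReal ((1-t)^2 * L) := by
        apply ENNReal.ofReal_le_ofReal
        have h12 : (1:ℝ)/2 ≤ 1 - t := by linarith
        have hsq : (1/4:ℝ) ≤ (1-t)^2 := by nlinarith
        nlinarith [mul_le_mul_of_nonneg_right hsq hL0.le]
      calc ENNReal.ofReal (L/4) * c ^ (1/N')
          ≤ ENNReal.ofReal ((1-t)^2 * L) * c ^ (1/N') := mul_le_mul_left h1 _
        _ ≤ _ := le_trans hLHS (le_trans hEnt hRHS)
    -- raise to the N'-th power
    have hrpow := ENNReal.rpow_le_rpow hchain hN'0.le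
    rw [ENNReal.mul_rpow_of_nonneg _ _ hN'0.le, ← ENNReal.rpow_mul,
      ← ENNReal.rpow_mul, one_div_mul_cancel hN'0.ne', ENNReal.rpow_one,
      ENNReal.rpow_one] at hrpow
    have hfin : ε₀ ≤ m A := by rw [hε₀def]; exact hrpow
    refine le_trans hfin (measure_mono ?_)
    intro z hz
    rw [hAdef, Set.mem_setOf_eq] at hz
    constructor
    · exact lt_of_lt_of_le (by positivity) hz.1
    · have : t * R2 = R2 / (n+2) := by rw [htdef]; ring
      rw [← this]
      exact hz.2
  -- now derive the contradiction by letting n → ∞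
  have hSmeas : ∀ n : ℕ, MeasurableSet (S n) := by
    intro n
    exact (measurableSet_lt measurable_const hdm).inter (measurableSet_le hdm measurable_const)
  have hSanti : Antitone S := by
    intro n k hnk z hz
    rw [hSdef, Set.mem_setOf_eq] at hz ⊢
    refine ⟨hz.1, le_trans hz.2 ?_⟩
    apply div_le_div_of_nonneg_left hR2pos.le (by positivity)
    have : (n:ℝ) ≤ k := Nat.cast_le.mpr hnk
    linarith
  have hSfin : ∃ n : ℕ, m (S n) ≠ ∞ := by
    obtain ⟨n, hn⟩ := exists_nat_gt (R2 / rx)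
    refine ⟨n, ne_top_of_le_ne_top hUxfin.ne (measure_mono ?_)⟩
    intro z hz
    rw [hSdef, Set.mem_setOf_eq] at hz
    apply hrxsub
    rw [Metric.mem_ball, dist_comm]
    have h1 : R2 / ((n:ℝ)+2) < rx := by
      rw [div_lt_iff₀ (by positivity)]
      calc R2 = rx * (R2 / rx) := by field_simp
        _ < rx * ((n:ℝ)+2) := by
            apply mul_lt_mul_of_pos_left _ hrxpos
            linarith
    exact lt_of_le_of_lt hz.2 h1
  have hSempty : ⋂ n, S n = ∅ := by
    rw [Set.eq_empty_iff_forall_notMem]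
    intro z hz
    have h1 : ∀ n : ℕ, z ∈ S n := Set.mem_iInter.mp hz
    have hd0 : 0 < dist x z := (h1 0).1
    obtain ⟨n, hn⟩ := exists_nat_gt (R2 / dist x z)
    have h2 := (h1 n).2
    have h3 : R2 / ((n:ℝ)+2) < dist x z := by
      rw [div_lt_iff₀ (by positivity)]
      calc R2 = dist x z * (R2 / dist x z) := by field_simp
        _ < dist x z * ((n:ℝ)+2) := by
            apply mul_lt_mul_of_pos_left _ hd0
            linarith
    exact absurd h2 (not_le.mpr h3)
  have htend : Tendsto (fun n => m (S n)) atTop (nhds 0) := by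
    have := tendsto_measure_iInter_atTop (μ := m) (s := S)
      (fun n => (hSmeas n).nullMeasurableSet) hSanti hSfin
    rwa [hSempty, measure_empty] at this
  have hev : ∀ᶠ n in atTop, m (S n) < ε₀ := htend.eventually_lt_const hε₀pos
  obtain ⟨n, hn⟩ := hev.exists
  exact absurd (hmain n) (not_le.mpr hn)


end PaperCD
end
end
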